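/- arXiv:2604.20253 — 7 statements merged into one kernel-verified Lean document; each statement's English description precedes it below -/
import Mathlib

section
/- Let F be a subformula-closed set of CTL formulas and let M = ⟨S,C,R,L⟩ be a sound model over F. Then for every assertion a = (s,φ,b) with L(s,φ) = b and φ ∈ F a compound formula, the model ⟨S,C,R,L restricted to S×children(φ)⟩ is evidence for a. -/
namespace CTLviz

/-- CTL formulas over basic propositions from `P`, generated by the core grammar
`φ ::= p | ⊤ | ¬ψ | ψ₁∨ψ₂ | EX ψ | E[ψ₁ U ψ₂] | EG ψ`. -/
inductive Formula (P : Type) : Type where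
  | prop : P → Formula P
  | tt : Formula P
  | neg : Formula P → Formula P
  | or : Formula P → Formula P → Formula P
  | EX : Formula P → Formula P
  | EU : Formula P → Formula P → Formula P
  | EG : Formula P → Formula P

namespace Formula

variable {P : Type}

/-- The set of immediate subformulas. -/
def children : Formula P → Set (Formula P)
  | .prop _ => ∅
  | .tt => ∅
  | .neg ψ => {ψ}
  | .or ψ₁ ψ₂ => {ψ₁, ψ₂}
  | .EX ψ => {ψ}
  | .EU ψ₁ ψ₂ => {ψ₁, ψ₂}
  | .EG ψ => {ψ}

/-- Compound formulas are those that are not basic propositions. -/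
def Compound : Formula P → Prop
  | .prop _ => False
  | _ => True

/-- Formulas in which the only operators occurring are ¬, ∨ and EU. -/
def OnlyNegOrEU : Formula P → Prop
  | .prop _ => True
  | .tt => False
  | .neg ψ => ψ.OnlyNegOrEU
  | .or ψ₁ ψ₂ => ψ₁.OnlyNegOrEU ∧ ψ₂.OnlyNegOrEU
  | .EX _ => False
  | .EU ψ₁ ψ₂ => ψ₁.OnlyNegOrEU ∧ ψ₂.OnlyNegOrEU
  | .EG _ => False

/-- The list of occurrences of basic propositions in a formula. -/
def props : Formula P → List P
  | .prop p => [p]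
  | .tt => []
  | .neg ψ => ψ.props
  | .or ψ₁ ψ₂ => ψ₁.props ++ ψ₂.props
  | .EX ψ => ψ.props
  | .EU ψ₁ ψ₂ => ψ₁.props ++ ψ₂.props
  | .EG ψ => ψ.props

/-- EU- and EG-formulas. -/
def IsEUorEG : Formula P → Prop
  | .EU _ _ => True
  | .EG _ => True
  | _ => False

end Formula

/-- A set of formulas is subformula-closed if it contains all immediate
subformulas of its members. -/
def SubformulaClosed {P : Type} (F : Set (Formula P)) : Prop :=
  ∀ φ ∈ F, Formula.children φ ⊆ F

/-- Finite or infinite sequences over `σ`: `get n = some a` means that position `n`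
(0-based) holds `a`; the domain is downward closed.  Infinite sequences are
everywhere defined, finite ones are eventually `none`. -/
structure FSeq (σ : Type) : Type where
  get : ℕ → Option σ
  down : ∀ n, get n = none → get (n + 1) = none

theorem FSeq.ext' {σ : Type} {ρ ρ' : FSeq σ} (h : ∀ n, ρ.get n = ρ'.get n) : ρ = ρ' := by
  cases ρ with
  | mk g d =>
    cases ρ' with
    | mk g' d' =>
      have hg : g = g' := funext h
      subst hg
      rfl

/-- `ρ.IsPrefix ρ'` : the sequence `ρ` is a prefix of `ρ'`. -/
def FSeq.IsPrefix {σ : Type} (ρ ρ' : FSeq σ) : Prop :=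
  ∀ n a, ρ.get n = some a → ρ'.get n = some a

/-- All elements of the sequence lie in `Z`. -/
def SeqAll {σ : Type} (Z : Set σ) (ρ : FSeq σ) : Prop :=
  ∀ n a, ρ.get n = some a → a ∈ Z

/-- A relation is acyclic if no element is related to itself by the
transitive closure of the relation. -/
def Acyclic {σ : Type} (R : Set (σ × σ)) : Prop :=
  ∀ a, ¬ Relation.TransGen (fun x y => (x, y) ∈ R) a a

/-- The relation `<ρ` linking consecutive elements of a (finite) sequence,
here given as a list. -/
def ListConsec {σ : Type} (l : List σ) : Set (σ × σ) :=
  {p | ∃ i, l[i]? = some p.1 ∧ l[i + 1]? = some p.2}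

/-- A model over a set `F` of formulas: a countable set `S` of states taken from the
universe `σ`, a subset `C ⊆ S` of closed states, a transition relation `R ⊆ S×S` and
a partial labelling `L : S × F ⇀ Bool` (encoded via `Option Bool`). -/
structure Model (σ P : Type) (F : Set (Formula P)) : Type where
  S : Set σ
  C : Set σ
  R : Set (σ × σ)
  L : σ → Formula P → Option Bool
  countable_S : S.Countable
  C_sub : C ⊆ S
  R_sub : ∀ p ∈ R, p.1 ∈ S ∧ p.2 ∈ S
  L_dom : ∀ s φ, L s φ ≠ none → s ∈ S ∧ φ ∈ F

namespace Model

variable {σ P : Type} {F : Set (Formula P)}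

/-- Direct successors of a state. -/
def succ (M : Model σ P F) (s : σ) : Set σ := {t | (s, t) ∈ M.R}

/-- The R-maximal (terminal) states, i.e. those without outgoing transitions. -/
def terminal (M : Model σ P F) : Set σ := {a ∈ M.S | ∀ b, (a, b) ∉ M.R}

/-- A (finite or infinite) path from `s`: consecutive elements are R-related. -/
def IsPath (M : Model σ P F) (s : σ) (ρ : FSeq σ) : Prop :=
  ρ.get 0 = some s ∧
  (∀ n a, ρ.get n = some a → a ∈ M.S) ∧
  (∀ n a b, ρ.get n = some a → ρ.get (n + 1) = some b → (a, b) ∈ M.R)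

/-- A maximal path from `s`: a path that is not a proper prefix of another path. -/
def IsMaxPath (M : Model σ P F) (s : σ) (ρ : FSeq σ) : Prop :=
  M.IsPath s ρ ∧ ∀ ρ', M.IsPath s ρ' → ρ.IsPrefix ρ' → ρ' = ρ

/-- A model is full if all its states are closed and its labelling is total on `S × F`. -/
def Full (M : Model σ P F) : Prop :=
  M.C = M.S ∧ ∀ s ∈ M.S, ∀ φ ∈ F, M.L s φ ≠ none

/-- Standard CTL satisfaction (used on full models). -/
def Sat (M : Model σ P F) : Formula P → σ → Prop
  | .prop p, s => M.L s (.prop p) = some true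
  | .tt, _ => True
  | .neg ψ, s => ¬ Sat M ψ s
  | .or ψ₁ ψ₂, s => Sat M ψ₁ s ∨ Sat M ψ₂ s
  | .EX ψ, s => ∃ t ∈ M.succ s, Sat M ψ t
  | .EU ψ₁ ψ₂, s => ∃ ρ, M.IsMaxPath s ρ ∧ ∃ n b, ρ.get n = some b ∧ Sat M ψ₂ b ∧
      ∀ i < n, ∀ a, ρ.get i = some a → Sat M ψ₁ a
  | .EG ψ, s => ∃ ρ, M.IsMaxPath s ρ ∧ ∀ n a, ρ.get n = some a → Sat M ψ a

/-- A model is sound if it is full and its labelling agrees with satisfaction. -/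
def Sound (M : Model σ P F) : Prop :=
  M.Full ∧ ∀ s ∈ M.S, ∀ φ ∈ F, (M.L s φ = some true ↔ M.Sat φ s)

end Model

/-- The submodel relation `⊑`: componentwise inclusion, where moreover every
transition of `M₂` missing in `M₁` starts outside the closed states of `M₁`. -/
def Submodel {σ P : Type} {F : Set (Formula P)} (M₁ M₂ : Model σ P F) : Prop :=
  M₁.S ⊆ M₂.S ∧ M₁.C ⊆ M₂.C ∧ M₁.R ⊆ M₂.R ∧
  (∀ s φ b, M₁.L s φ = some b → M₂.L s φ = some b) ∧
  ∀ p ∈ M₂.R, p ∉ M₁.R → p.1 ∉ M₁.C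

/-- Proper submodels. -/
def ProperSubmodel {σ P : Type} {F : Set (Formula P)} (M₁ M₂ : Model σ P F) : Prop :=
  Submodel M₁ M₂ ∧ ¬ Submodel M₂ M₁

/-- A model is consistent if it has a sound supermodel. -/
def Consistent {σ P : Type} {F : Set (Formula P)} (M : Model σ P F) : Prop :=
  ∃ N : Model σ P F, N.Sound ∧ Submodel M N

/-- A consistent model `M` is evidence for the assertion `(s, φ, b)` if its labelling
domain is contained in `S × children(φ)` and every sound supermodel `N ⊒ M` has
`L_N(s,φ) = b`. -/
def Evidence {σ P : Type} {F : Set (Formula P)} (M : Model σ P F)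
    (s : σ) (φ : Formula P) (b : Bool) : Prop :=
  Consistent M ∧ (∀ t ψ, M.L t ψ ≠ none → ψ ∈ Formula.children φ) ∧
  ∀ N : Model σ P F, N.Sound → Submodel M N → N.L s φ = some b

/-- A witness for `(s, φ)` is evidence for `(s, φ, true)`. -/
def Witness {σ P : Type} {F : Set (Formula P)} (M : Model σ P F)
    (s : σ) (φ : Formula P) : Prop :=
  Evidence M s φ true

/-- A counterexample for `(s, φ)` is evidence for `(s, φ, false)`. -/
def Counterexample {σ P : Type} {F : Set (Formula P)} (M : Model σ P F)
    (s : σ) (φ : Formula P) : Prop :=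
  Evidence M s φ false

namespace Model

variable {σ P : Type} {F : Set (Formula P)}

/-- The witness condition `W_M(s,φ)` (Table 1); arbitrary (`False`) on basic propositions. -/
def W (M : Model σ P F) (s : σ) : Formula P → Prop
  | .prop _ => False
  | .tt => True
  | .neg ψ => M.L s ψ = some false
  | .or ψ₁ ψ₂ => M.L s ψ₁ = some true ∨ M.L s ψ₂ = some true
  | .EX ψ => ∃ t ∈ M.succ s, M.L t ψ = some true
  | .EU ψ₁ ψ₂ => ∃ ρ, M.IsMaxPath s ρ ∧ ∃ n b, ρ.get n = some b ∧ M.L b ψ₂ = some true ∧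
      ∀ i < n, ∀ a, ρ.get i = some a → M.L a ψ₁ = some true
  | .EG ψ => ∃ ρ, M.IsMaxPath s ρ ∧ (∀ n a, ρ.get n = some a → M.L a ψ = some true) ∧
      ∀ n a, ρ.get n = some a → ρ.get (n + 1) = none → a ∈ M.C

/-- The counterexample condition `C_M(s,φ)` (Table 1); arbitrary (`False`) on basic
propositions. -/
def Cc (M : Model σ P F) (s : σ) : Formula P → Prop
  | .prop _ => False
  | .tt => False
  | .neg ψ => M.L s ψ = some true
  | .or ψ₁ ψ₂ => M.L s ψ₁ = some false ∧ M.L s ψ₂ = some false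
  | .EX ψ => s ∈ M.C ∧ ∀ t ∈ M.succ s, M.L t ψ = some false
  | .EU ψ₁ ψ₂ => ∀ ρ, M.IsMaxPath s ρ →
      ((∀ n a, ρ.get n = some a → a ∈ M.C ∧ M.L a ψ₂ = some false) ∨
        ∃ n b, ρ.get n = some b ∧ M.L b ψ₁ = some false ∧ M.L b ψ₂ = some false ∧
          ∀ i < n, ∀ a, ρ.get i = some a → a ∈ M.C ∧ M.L a ψ₂ = some false)
  | .EG ψ => ∀ ρ, M.IsMaxPath s ρ →
      ∃ n b, ρ.get n = some b ∧ M.L b ψ = some false ∧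
        ∀ i < n, ∀ a, ρ.get i = some a → a ∈ M.C

/-- The minimal-witness condition `mW_M(s,φ)` (Table 2). -/
def mW (M : Model σ P F) (s : σ) : Formula P → Prop
  | .prop _ => False
  | .tt => M.S = {s} ∧ M.C = ∅ ∧ M.R = ∅ ∧ ∀ t ξ, M.L t ξ = none
  | .neg ψ => M.S = {s} ∧ M.C = ∅ ∧ M.R = ∅ ∧
      ∀ t ξ b, M.L t ξ = some b ↔ t = s ∧ ξ = ψ ∧ b = false
  | .or ψ₁ ψ₂ => M.S = {s} ∧ M.C = ∅ ∧ M.R = ∅ ∧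
      ((∀ t ξ b, M.L t ξ = some b ↔ t = s ∧ ξ = ψ₁ ∧ b = true) ∨
        ∀ t ξ b, M.L t ξ = some b ↔ t = s ∧ ξ = ψ₂ ∧ b = true)
  | .EX ψ => ∃ s', M.S = {s, s'} ∧ M.C = ∅ ∧ M.R = {(s, s')} ∧
      ∀ t ξ b, M.L t ξ = some b ↔ t = s' ∧ ξ = ψ ∧ b = true
  | .EU ψ₁ ψ₂ => ∃ l : List σ, l ≠ [] ∧ l.head? = some s ∧ l.Nodup ∧
      M.S = {a | a ∈ l} ∧ M.C = ∅ ∧ M.R = ListConsec l ∧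
      ∀ t ξ b, M.L t ξ = some b ↔
        b = true ∧ ((t ∈ l.dropLast ∧ ξ = ψ₁) ∨ (l.getLast? = some t ∧ ξ = ψ₂))
  | .EG ψ => ∃ ρ : FSeq σ, ρ.get 0 = some s ∧
      (∀ i j a, i < j → ρ.get i = some a → ρ.get j = some a → ρ.get (j + 1) = none) ∧
      M.S = {a | ∃ n, ρ.get n = some a} ∧
      M.C = {a | (∃ n, ρ.get n = some a) ∧ ∀ n, ρ.get n = some a → ρ.get (n + 1) = none} ∧
      M.R = {p | ∃ n, ρ.get n = some p.1 ∧ ρ.get (n + 1) = some p.2} ∧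
      ∀ t ξ b, M.L t ξ = some b ↔ b = true ∧ ξ = ψ ∧ ∃ n, ρ.get n = some t

/-- The minimal-counterexample condition `mC_M(s,φ)` (Table 2). -/
def mC (M : Model σ P F) (s : σ) : Formula P → Prop
  | .prop _ => False
  | .tt => False
  | .neg ψ => M.S = {s} ∧ M.C = ∅ ∧ M.R = ∅ ∧
      ∀ t ξ b, M.L t ξ = some b ↔ t = s ∧ ξ = ψ ∧ b = true
  | .or ψ₁ ψ₂ => M.S = {s} ∧ M.C = ∅ ∧ M.R = ∅ ∧
      ∀ t ξ b, M.L t ξ = some b ↔ t = s ∧ (ξ = ψ₁ ∨ ξ = ψ₂) ∧ b = false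
  | .EX ψ => ∃ T : Set σ, M.S = {s} ∪ T ∧ M.C = {s} ∧
      M.R = {p | p.1 = s ∧ p.2 ∈ T} ∧
      ∀ t ξ b, M.L t ξ = some b ↔ t ∈ T ∧ ξ = ψ ∧ b = false
  | .EU ψ₁ ψ₂ => s ∈ M.S ∧
      (∀ a ∈ M.S, Relation.ReflTransGen (fun x y => (x, y) ∈ M.R) s a) ∧
      M.S \ M.terminal ⊆ M.C ∧
      ∀ t ξ b, M.L t ξ = some b ↔
        b = false ∧ t ∈ M.S ∧ (ξ = ψ₂ ∨ (ξ = ψ₁ ∧ t ∉ M.C))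
  | .EG ψ => M.S.Finite ∧ Acyclic M.R ∧
      {a ∈ M.S | ∀ b, (b, a) ∉ M.R} = {s} ∧
      M.C = M.S \ M.terminal ∧
      ∀ t ξ b, M.L t ξ = some b ↔ b = false ∧ ξ = ψ ∧ t ∈ M.terminal

open Classical in
/-- The model obtained from `M` by restricting the labelling to the formulas in `G`. -/
noncomputable def restrictL (M : Model σ P F) (G : Set (Formula P)) : Model σ P F where
  S := M.S
  C := M.C
  R := M.R
  L := fun t ψ => if ψ ∈ G then M.L t ψ else none
  countable_S := M.countable_S
  C_sub := M.C_sub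
  R_sub := M.R_sub
  L_dom := by
    intro t ψ h
    try dsimp only at h
    by_cases hg : ψ ∈ G
    · rw [if_pos hg] at h
      exact M.L_dom t ψ h
    · rw [if_neg hg] at h
      exact absurd rfl h

open Classical in
/-- The restriction `M|s` of `M` to the states R-reachable from `s`. -/
noncomputable def restrictReach (M : Model σ P F) (s : σ) : Model σ P F where
  S := {t ∈ M.S | Relation.ReflTransGen (fun x y => (x, y) ∈ M.R) s t}
  C := {t ∈ M.C | Relation.ReflTransGen (fun x y => (x, y) ∈ M.R) s t}
  R := {p ∈ M.R | Relation.ReflTransGen (fun x y => (x, y) ∈ M.R) s p.1}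
  L := fun t ψ =>
    if Relation.ReflTransGen (fun x y => (x, y) ∈ M.R) s t then M.L t ψ else none
  countable_S := M.countable_S.mono fun t ht => ht.1
  C_sub := fun t ht => ⟨M.C_sub ht.1, ht.2⟩
  R_sub := fun p hp =>
    ⟨⟨(M.R_sub p hp.1).1, hp.2⟩, ⟨(M.R_sub p hp.1).2, hp.2.tail hp.1⟩⟩
  L_dom := by
    intro t ψ h
    try dsimp only at h
    by_cases hg : Relation.ReflTransGen (fun x y => (x, y) ∈ M.R) s t
    · rw [if_pos hg] at h
      exact ⟨⟨(M.L_dom t ψ h).1, hg⟩, (M.L_dom t ψ h).2⟩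
    · rw [if_neg hg] at h
      exact absurd rfl h

end Model

/-- Natural evidence (for an EU- or EG-assertion): evidence whose labelling is defined
on every child of the formula at every non-R-maximal state. -/
def NaturalEvidence {σ P : Type} {F : Set (Formula P)} (M : Model σ P F)
    (s : σ) (φ : Formula P) (b : Bool) : Prop :=
  Evidence M s φ b ∧ Formula.IsEUorEG φ ∧
  ∀ t ∈ M.S, (∃ u, (t, u) ∈ M.R) → ∀ ψ ∈ Formula.children φ, M.L t ψ ≠ none

/-- Minimal natural evidence: natural evidence none of whose proper submodels is
natural evidence for the same assertion. -/
def MinNaturalEvidence {σ P : Type} {F : Set (Formula P)} (M : Model σ P F)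
    (s : σ) (φ : Formula P) (b : Bool) : Prop :=
  NaturalEvidence M s φ b ∧
  ∀ N : Model σ P F, ProperSubmodel N M → ¬ NaturalEvidence N s φ b

/-- A set `G` of formulas is constrained (relative to `F` and the state universe `σ`)
if there exists an inconsistent model over `F` whose labelling domain is contained
in `S × G`. -/
def Constrained (σ : Type) {P : Type} (F : Set (Formula P)) (G : Set (Formula P)) : Prop :=
  ∃ M : Model σ P F, (∀ t ψ, M.L t ψ ≠ none → ψ ∈ G) ∧ ¬ Consistent M

/-- A proof over `F`: a model `N` together with a map `π` assigning to every compound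
assertion `(s,φ,b)` of `N` a submodel of `N` that is evidence for it. -/
def IsProof {σ P : Type} {F : Set (Formula P)} (N : Model σ P F)
    (π : σ → Formula P → Bool → Model σ P F) : Prop :=
  ∀ s φ b, N.L s φ = some b → Formula.Compound φ →
    Submodel (π s φ b) N ∧ Evidence (π s φ b) s φ b

/-- For a sound model `M` over a subformula-closed `F` and any assertion
`(s,φ,b)` of `M` with `φ ∈ F` compound, the model `⟨S,C,R,L↾S×children(φ)⟩`
is evidence for `(s,φ,b)`. -/
theorem restrict_is_evidence {σ P : Type} [Countable P] {F : Set (Formula P)}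
    (hF : SubformulaClosed F) (M : Model σ P F) (hsound : M.Sound)
    (s : σ) (φ : Formula P) (b : Bool) (hφ : φ ∈ F) (hcomp : Formula.Compound φ)
    (ha : M.L s φ = some b) :
    Evidence (M.restrictL (Formula.children φ)) s φ b := by
  have hMfull := hsound.1
  have hC : M.C = M.S := hMfull.1
  have hsS : s ∈ M.S := (M.L_dom s φ (by simp [ha])).1
  have hsubM : Submodel (M.restrictL (Formula.children φ)) M := by
    refine ⟨subset_rfl, subset_rfl, subset_rfl, ?_, ?_⟩
    · intro t ψ c h
      dsimp [Model.restrictL] at h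
      split at h
      · exact h
      · exact absurd h (by simp)
    · intro p hp hnp
      exact absurd hp hnp
  refine ⟨⟨M, hsound, hsubM⟩, ?_, ?_⟩
  · intro t ψ h
    dsimp [Model.restrictL] at h
    by_contra hn
    rw [if_neg hn] at h
    exact h rfl
  · intro N hNs hsub
    have hSsub : M.S ⊆ N.S := hsub.1
    have hRM : M.R ⊆ N.R := hsub.2.2.1
    have hLtr : ∀ t ψ c, ψ ∈ Formula.children φ → M.L t ψ = some c → N.L t ψ = some c := by
      intro t ψ c hψ h
      apply hsub.2.2.2.1
      dsimp [Model.restrictL]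
      rw [if_pos hψ]
      exact h
    have hRN : ∀ p ∈ N.R, p.1 ∈ M.S → p ∈ M.R := by
      intro p hp hp1
      by_contra h
      exact (hsub.2.2.2.2 p hp h) (hC ▸ hp1)
    have hLchild : ∀ t ∈ M.S, ∀ ψ ∈ Formula.children φ, (N.Sat ψ t ↔ M.Sat ψ t) := by
      intro t ht ψ hψ
      have hψF : ψ ∈ F := hF φ hφ hψ
      obtain ⟨c, hc⟩ := Option.ne_none_iff_exists'.1 (hMfull.2 t ht ψ hψF)
      have hNc : N.L t ψ = some c := hLtr t ψ c hψ hc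
      rw [← hNs.2 t (hSsub ht) ψ hψF, ← hsound.2 t ht ψ hψF, hc, hNc]
    have hstate : ∀ ρ : FSeq σ, ∀ s' ∈ M.S, N.IsPath s' ρ →
        ∀ n a, ρ.get n = some a → a ∈ M.S := by
      intro ρ s' hs' hρ n
      induction n with
      | zero =>
        intro a h
        rw [hρ.1] at h
        cases h
        exact hs'
      | succ n ih =>
        intro a h
        have hn : ρ.get n ≠ none := by
          intro hnone
          rw [ρ.down n hnone] at h
          cases h
        obtain ⟨a', ha'⟩ := Option.ne_none_iff_exists'.1 hn
        have haS : a' ∈ M.S := ih a' ha'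
        have hr : (a', a) ∈ N.R := hρ.2.2 n a' a ha' h
        exact (M.R_sub _ (hRN _ hr haS)).2
    have hpath : ∀ s' ∈ M.S, ∀ ρ, (M.IsPath s' ρ ↔ N.IsPath s' ρ) := by
      intro s' hs' ρ
      constructor
      · intro h
        exact ⟨h.1, fun n a ha => hSsub (h.2.1 n a ha),
          fun n a c ha hc => hRM (h.2.2 n a c ha hc)⟩
      · intro h
        refine ⟨h.1, hstate ρ s' hs' h, ?_⟩
        intro n a c ha hc
        exact hRN _ (h.2.2 n a c ha hc) (hstate ρ s' hs' h n a ha)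
    have hmax : ∀ s' ∈ M.S, ∀ ρ, (M.IsMaxPath s' ρ ↔ N.IsMaxPath s' ρ) := by
      intro s' hs' ρ
      constructor
      · intro ⟨h1, h2⟩
        refine ⟨(hpath s' hs' ρ).1 h1, ?_⟩
        intro ρ' hρ' hpre
        exact h2 ρ' ((hpath s' hs' ρ').2 hρ') hpre
      · intro ⟨h1, h2⟩
        refine ⟨(hpath s' hs' ρ).2 h1, ?_⟩
        intro ρ' hρ' hpre
        exact h2 ρ' ((hpath s' hs' ρ').1 hρ') hpre
    -- the key equivalence of one-step satisfaction
    have hequiv : N.Sat φ s ↔ M.Sat φ s := by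
      cases φ with
      | prop p => exact absurd hcomp (by simp [Formula.Compound])
      | tt => simp [Model.Sat]
      | neg ψ =>
        have hψ : ψ ∈ Formula.children (Formula.neg ψ) := by simp [Formula.children]
        simp only [Model.Sat]
        rw [hLchild s hsS ψ hψ]
      | or ψ₁ ψ₂ =>
        have h1 : ψ₁ ∈ Formula.children (Formula.or ψ₁ ψ₂) := by simp [Formula.children]
        have h2 : ψ₂ ∈ Formula.children (Formula.or ψ₁ ψ₂) := by simp [Formula.children]
        simp only [Model.Sat]
        rw [hLchild s hsS ψ₁ h1, hLchild s hsS ψ₂ h2]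
      | EX ψ =>
        have hψ : ψ ∈ Formula.children (Formula.EX ψ) := by simp [Formula.children]
        simp only [Model.Sat]
        constructor
        · rintro ⟨t, ht, hsat⟩
          have htM : (s, t) ∈ M.R := hRN _ ht hsS
          have htS : t ∈ M.S := (M.R_sub _ htM).2
          exact ⟨t, htM, (hLchild t htS ψ hψ).1 hsat⟩
        · rintro ⟨t, ht, hsat⟩
          have htS : t ∈ M.S := (M.R_sub _ ht).2
          exact ⟨t, hRM ht, (hLchild t htS ψ hψ).2 hsat⟩
      | EU ψ₁ ψ₂ =>
        have h1 : ψ₁ ∈ Formula.children (Formula.EU ψ₁ ψ₂) := by simp [Formula.children]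
        have h2 : ψ₂ ∈ Formula.children (Formula.EU ψ₁ ψ₂) := by simp [Formula.children]
        simp only [Model.Sat]
        constructor
        · rintro ⟨ρ, hρ, n, c, hc, hsat2, hsat1⟩
          have hρM : M.IsMaxPath s ρ := (hmax s hsS ρ).2 hρ
          have hS : ∀ k a, ρ.get k = some a → a ∈ M.S := hρM.1.2.1
          refine ⟨ρ, hρM, n, c, hc, (hLchild c (hS n c hc) ψ₂ h2).1 hsat2, ?_⟩
          intro i hi a hia
          exact (hLchild a (hS i a hia) ψ₁ h1).1 (hsat1 i hi a hia)
        · rintro ⟨ρ, hρ, n, c, hc, hsat2, hsat1⟩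
          have hS : ∀ k a, ρ.get k = some a → a ∈ M.S := hρ.1.2.1
          refine ⟨ρ, (hmax s hsS ρ).1 hρ, n, c, hc,
            (hLchild c (hS n c hc) ψ₂ h2).2 hsat2, ?_⟩
          intro i hi a hia
          exact (hLchild a (hS i a hia) ψ₁ h1).2 (hsat1 i hi a hia)
      | EG ψ =>
        have hψ : ψ ∈ Formula.children (Formula.EG ψ) := by simp [Formula.children]
        simp only [Model.Sat]
        constructor
        · rintro ⟨ρ, hρ, hsat⟩
          have hρM : M.IsMaxPath s ρ := (hmax s hsS ρ).2 hρ
          have hS : ∀ k a, ρ.get k = some a → a ∈ M.S := hρM.1.2.1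
          exact ⟨ρ, hρM, fun n a ha => (hLchild a (hS n a ha) ψ hψ).1 (hsat n a ha)⟩
        · rintro ⟨ρ, hρ, hsat⟩
          have hS : ∀ k a, ρ.get k = some a → a ∈ M.S := hρ.1.2.1
          exact ⟨ρ, (hmax s hsS ρ).1 hρ,
            fun n a ha => (hLchild a (hS n a ha) ψ hψ).2 (hsat n a ha)⟩
    obtain ⟨c, hc⟩ := Option.ne_none_iff_exists'.1 (hNs.1.2 s (hSsub hsS) φ hφ)
    have hNiff : (c = true) ↔ N.Sat φ s := by
      rw [← hNs.2 s (hSsub hsS) φ hφ, hc]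
      simp
    have hMiff : (b = true) ↔ M.Sat φ s := by
      rw [← hsound.2 s hsS φ hφ, ha]
      simp
    have : c = b := by
      have := hNiff.trans (hequiv.trans hMiff.symm)
      cases c <;> cases b <;> simp_all
    rw [hc, this]

end CTLviz
end

section
/- Let F be a subformula-closed set of CTL formulas. A model M over F is consistent if and only if M ⊑ N for some proof ⟨N,π⟩ over F. -/
namespace CTLviz

section Aux

variable {σ P : Type} {F : Set (Formula P)}

theorem submodel_refl (M : Model σ P F) : Submodel M M :=
  ⟨subset_rfl, subset_rfl, subset_rfl, fun _ _ _ h => h, fun p hp hnp => (hnp hp).elim⟩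

theorem submodel_trans {A B C : Model σ P F} (h1 : Submodel A B) (h2 : Submodel B C) :
    Submodel A C := by
  obtain ⟨s1, c1, r1, l1, t1⟩ := h1
  obtain ⟨s2, c2, r2, l2, t2⟩ := h2
  refine ⟨s1.trans s2, c1.trans c2, r1.trans r2, fun s φ b h => l2 _ _ _ (l1 _ _ _ h), ?_⟩
  intro p hp hnp
  by_cases hB : p ∈ B.R
  · exact t1 p hB hnp
  · exact fun hc => t2 p hp hB (c1 hc)

theorem path_iff {A B : Model σ P F} (hS : A.S ⊆ B.S) (hR : A.R ⊆ B.R)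
    (hsucc : ∀ t ∈ A.S, ∀ u, (t, u) ∈ B.R → (t, u) ∈ A.R) {s : σ} (hs : s ∈ A.S)
    (ρ : FSeq σ) : A.IsPath s ρ ↔ B.IsPath s ρ := by
  constructor
  · rintro ⟨h0, hst, hrel⟩
    exact ⟨h0, fun n a ha => hS (hst n a ha), fun n a b ha hb => hR (hrel n a b ha hb)⟩
  · rintro ⟨h0, hst, hrel⟩
    have hmem : ∀ n a, ρ.get n = some a → a ∈ A.S := by
      intro n
      induction n with
      | zero =>
        intro a ha
        have : some s = some a := h0.symm.trans ha
        cases this; exact hs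
      | succ n ih =>
        intro a ha
        obtain ⟨a', ha'⟩ : ∃ a', ρ.get n = some a' := by
          cases h : ρ.get n with
          | none => rw [ρ.down n h] at ha; cases ha
          | some x => exact ⟨x, rfl⟩
        have hr : (a', a) ∈ A.R := hsucc a' (ih a' ha') a (hrel n a' a ha' ha)
        exact (A.R_sub _ hr).2
    exact ⟨h0, hmem, fun n a b ha hb => hsucc a (hmem n a ha) b (hrel n a b ha hb)⟩

theorem maxpath_iff {A B : Model σ P F} (hS : A.S ⊆ B.S) (hR : A.R ⊆ B.R)
    (hsucc : ∀ t ∈ A.S, ∀ u, (t, u) ∈ B.R → (t, u) ∈ A.R) {s : σ} (hs : s ∈ A.S)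
    (ρ : FSeq σ) : A.IsMaxPath s ρ ↔ B.IsMaxPath s ρ := by
  unfold Model.IsMaxPath
  rw [path_iff hS hR hsucc hs]
  constructor
  · rintro ⟨hp, hmax⟩
    exact ⟨hp, fun ρ' hp' hpre => hmax ρ' ((path_iff hS hR hsucc hs ρ').mpr hp') hpre⟩
  · rintro ⟨hp, hmax⟩
    exact ⟨hp, fun ρ' hp' hpre => hmax ρ' ((path_iff hS hR hsucc hs ρ').mp hp') hpre⟩

theorem sat_congr {A B : Model σ P F} (hS : A.S = B.S) (hR : A.R = B.R)
    (hp : ∀ t p, A.L t (.prop p) = some true ↔ B.L t (.prop p) = some true) :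
    ∀ (φ : Formula P) t, A.Sat φ t ↔ B.Sat φ t := by
  have hsucc : ∀ t, A.succ t = B.succ t := by
    intro t; unfold Model.succ; rw [hR]
  have hpath : ∀ t ρ, A.IsPath t ρ ↔ B.IsPath t ρ := by
    intro t ρ; unfold Model.IsPath; rw [hS, hR]
  have hmax : ∀ t ρ, A.IsMaxPath t ρ ↔ B.IsMaxPath t ρ := by
    intro t ρ
    unfold Model.IsMaxPath
    rw [hpath]
    constructor
    · rintro ⟨h1, h2⟩; exact ⟨h1, fun ρ' hp' => h2 ρ' ((hpath t ρ').mpr hp')⟩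
    · rintro ⟨h1, h2⟩; exact ⟨h1, fun ρ' hp' => h2 ρ' ((hpath t ρ').mp hp')⟩
  intro φ
  induction φ with
  | prop p => intro t; simpa [Model.Sat] using hp t p
  | tt => intro t; simp [Model.Sat]
  | neg ψ ih => intro t; simp only [Model.Sat]; rw [ih t]
  | or ψ₁ ψ₂ ih₁ ih₂ => intro t; simp only [Model.Sat]; rw [ih₁ t, ih₂ t]
  | EX ψ ih =>
    intro t
    simp only [Model.Sat]
    rw [hsucc t]
    exact exists_congr fun u => and_congr_right fun _ => ih u
  | EU ψ₁ ψ₂ ih₁ ih₂ =>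
    intro t
    simp only [Model.Sat]
    refine exists_congr fun ρ => and_congr (hmax t ρ) ?_
    refine exists_congr fun n => exists_congr fun b => and_congr_right fun _ => ?_
    refine and_congr (ih₂ b) ?_
    exact forall_congr' fun i => forall_congr' fun _ => forall_congr' fun a =>
      forall_congr' fun _ => ih₁ a
  | EG ψ ih =>
    intro t
    simp only [Model.Sat]
    refine exists_congr fun ρ => and_congr (hmax t ρ) ?_
    exact forall_congr' fun n => forall_congr' fun a => forall_congr' fun _ => ih a

open Classical in
/-- The base model of the completion: only propositions are labelled, extending `N`'s
labels by `false`. -/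
noncomputable def propBase (N : Model σ P F) : Model σ P F where
  S := N.S
  C := N.S
  R := N.R
  L := fun s φ => match φ with
    | .prop p =>
      if s ∈ N.S ∧ Formula.prop p ∈ F then some ((N.L s (.prop p)).getD false) else none
    | _ => none
  countable_S := N.countable_S
  C_sub := subset_rfl
  R_sub := N.R_sub
  L_dom := by
    intro s φ h
    cases φ with
    | prop p =>
      by_cases hd : s ∈ N.S ∧ Formula.prop p ∈ F
      · exact hd
      · exact absurd (if_neg hd) h
    | tt => exact absurd rfl h
    | neg _ => exact absurd rfl h
    | or _ _ => exact absurd rfl h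
    | EX _ => exact absurd rfl h
    | EU _ _ => exact absurd rfl h
    | EG _ => exact absurd rfl h

open Classical in
/-- The sound completion of a model: all states closed, labels computed by
satisfaction over the propositional base. -/
noncomputable def completion (N : Model σ P F) : Model σ P F where
  S := N.S
  C := N.S
  R := N.R
  L := fun s φ =>
    if s ∈ N.S ∧ φ ∈ F then some (decide ((propBase N).Sat φ s)) else none
  countable_S := N.countable_S
  C_sub := subset_rfl
  R_sub := N.R_sub
  L_dom := by
    intro s φ h
    by_cases hd : s ∈ N.S ∧ φ ∈ F
    · exact hd
    · exact absurd (if_neg hd) h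

open Classical in
theorem completion_prop_iff (N : Model σ P F) (t : σ) (p : P) :
    (completion N).L t (.prop p) = some true ↔ (propBase N).L t (.prop p) = some true := by
  show (if t ∈ N.S ∧ Formula.prop p ∈ F then
      some (decide ((propBase N).Sat (.prop p) t)) else none) = some true ↔ _
  by_cases hd : t ∈ N.S ∧ Formula.prop p ∈ F
  · rw [if_pos hd]
    have hbase : (propBase N).L t (.prop p)
        = some ((N.L t (.prop p)).getD false) := by
      show (if t ∈ N.S ∧ Formula.prop p ∈ F then _ else none) = _
      rw [if_pos hd]
    have hsat : (propBase N).Sat (.prop p) t ↔ (N.L t (.prop p)).getD false = true := by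
      show (propBase N).L t (.prop p) = some true ↔ _
      rw [hbase]; simp
    rw [hbase]
    simp [hsat]
  · rw [if_neg hd]
    have hbase : (propBase N).L t (.prop p) = none := by
      show (if t ∈ N.S ∧ Formula.prop p ∈ F then _ else none) = none
      rw [if_neg hd]
    rw [hbase]

theorem completion_sat (N : Model σ P F) :
    ∀ (φ : Formula P) t, (completion N).Sat φ t ↔ (propBase N).Sat φ t :=
  sat_congr rfl rfl (completion_prop_iff N)

open Classical in
theorem completion_sound (N : Model σ P F) : (completion N).Sound := by
  constructor
  · refine ⟨rfl, fun s hs φ hφ => ?_⟩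
    show (if s ∈ N.S ∧ φ ∈ F then _ else none) ≠ none
    rw [if_pos ⟨hs, hφ⟩]
    simp
  · intro s hs φ hφ
    show (if s ∈ N.S ∧ φ ∈ F then some (decide ((propBase N).Sat φ s)) else none)
        = some true ↔ _
    rw [if_pos ⟨hs, hφ⟩, completion_sat N φ s]
    simp

theorem restrict_sub (N : Model σ P F) (G : Set (Formula P)) :
    Submodel (N.restrictL G) N := by
  refine ⟨subset_rfl, subset_rfl, subset_rfl, ?_, fun p hp hnp => (hnp hp).elim⟩
  intro s φ b h
  by_cases hg : φ ∈ G
  · have : (N.restrictL G).L s φ = N.L s φ := if_pos hg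
    rw [← this]; exact h
  · have : (N.restrictL G).L s φ = none := if_neg hg
    rw [this] at h; cases h

theorem restrictL_eq_of_mem (N : Model σ P F) {G : Set (Formula P)} {φ : Formula P}
    (hg : φ ∈ G) (s : σ) : (N.restrictL G).L s φ = N.L s φ := if_pos hg

/-- The forcing lemma: the restriction of a sound model to the children of a compound
formula is evidence for the corresponding assertion. -/
theorem forcing {N : Model σ P F} (hF : SubformulaClosed F) (hN : N.Sound)
    {s : σ} {φ : Formula P} {b : Bool} (hL : N.L s φ = some b)
    (hc : Formula.Compound φ) :
    Evidence (N.restrictL (Formula.children φ)) s φ b := by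
  obtain ⟨hsN, hφF⟩ := N.L_dom s φ (by simp [hL])
  have hfull := hN.1
  have hCS : N.C = N.S := hfull.1
  refine ⟨⟨N, hN, restrict_sub N _⟩, ?_, ?_⟩
  · intro t ψ h
    by_cases hg : ψ ∈ Formula.children φ
    · exact hg
    · exact absurd (if_neg hg) h
  intro N'' h'' hsub
  have hSsub : N.S ⊆ N''.S := hsub.1
  have hRsub : N.R ⊆ N''.R := hsub.2.2.1
  have hsucc : ∀ t ∈ N.S, ∀ u, (t, u) ∈ N''.R → (t, u) ∈ N.R := by
    intro t ht u hu
    by_contra hnot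
    have h5 := hsub.2.2.2.2 (t, u) hu hnot
    exact h5 (by show t ∈ N.C; rw [hCS]; exact ht)
  have childSat : ∀ ψ ∈ Formula.children φ, ∀ t ∈ N.S, (N''.Sat ψ t ↔ N.Sat ψ t) := by
    intro ψ hψ t ht
    have hψF : ψ ∈ F := hF φ hφF hψ
    have hne := hfull.2 t ht ψ hψF
    obtain ⟨c, hcval⟩ : ∃ c, N.L t ψ = some c := by
      cases h : N.L t ψ with
      | none => exact absurd h hne
      | some x => exact ⟨x, rfl⟩
    have hπL : (N.restrictL (Formula.children φ)).L t ψ = some c := by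
      rw [restrictL_eq_of_mem N hψ]; exact hcval
    have h''L := hsub.2.2.2.1 t ψ c hπL
    have h1 : c = true ↔ N.Sat ψ t := by
      rw [← hN.2 t ht ψ hψF, hcval]; simp
    have h2 : c = true ↔ N''.Sat ψ t := by
      rw [← h''.2 t (hSsub ht) ψ hψF, h''L]; simp
    exact h2.symm.trans h1
  have hsEq : N''.succ s = N.succ s := by
    ext u
    exact ⟨fun hu => hsucc s hsN u hu, fun hu => hRsub hu⟩
  have hmax : ∀ ρ, N.IsMaxPath s ρ ↔ N''.IsMaxPath s ρ :=
    maxpath_iff hSsub hRsub hsucc hsN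
  have hsatEq : N''.Sat φ s ↔ N.Sat φ s := by
    cases φ with
    | prop p => exact hc.elim
    | tt => simp [Model.Sat]
    | neg ψ =>
      simp only [Model.Sat]
      rw [childSat ψ (by simp [Formula.children]) s hsN]
    | or ψ₁ ψ₂ =>
      simp only [Model.Sat]
      rw [childSat ψ₁ (by simp [Formula.children]) s hsN,
        childSat ψ₂ (by simp [Formula.children]) s hsN]
    | EX ψ =>
      simp only [Model.Sat]
      rw [hsEq]
      refine exists_congr fun t => and_congr_right fun ht => ?_
      exact childSat ψ (by simp [Formula.children]) t (N.R_sub _ ht).2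
    | EU ψ₁ ψ₂ =>
      simp only [Model.Sat]
      constructor
      · rintro ⟨ρ, hρ, n, x, hx, h2, h1⟩
        have hρN : N.IsMaxPath s ρ := (hmax ρ).mpr hρ
        have hstates := hρN.1.2.1
        exact ⟨ρ, hρN, n, x, hx,
          (childSat ψ₂ (by simp [Formula.children]) x (hstates n x hx)).mp h2,
          fun i hi a ha =>
            (childSat ψ₁ (by simp [Formula.children]) a (hstates i a ha)).mp (h1 i hi a ha)⟩
      · rintro ⟨ρ, hρ, n, x, hx, h2, h1⟩
        have hstates := hρ.1.2.1
        exact ⟨ρ, (hmax ρ).mp hρ, n, x, hx,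
          (childSat ψ₂ (by simp [Formula.children]) x (hstates n x hx)).mpr h2,
          fun i hi a ha =>
            (childSat ψ₁ (by simp [Formula.children]) a (hstates i a ha)).mpr (h1 i hi a ha)⟩
    | EG ψ =>
      simp only [Model.Sat]
      constructor
      · rintro ⟨ρ, hρ, hall⟩
        have hρN : N.IsMaxPath s ρ := (hmax ρ).mpr hρ
        have hstates := hρN.1.2.1
        exact ⟨ρ, hρN, fun n a ha =>
          (childSat ψ (by simp [Formula.children]) a (hstates n a ha)).mp (hall n a ha)⟩
      · rintro ⟨ρ, hρ, hall⟩
        have hstates := hρ.1.2.1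
        exact ⟨ρ, (hmax ρ).mp hρ, fun n a ha =>
          (childSat ψ (by simp [Formula.children]) a (hstates n a ha)).mpr (hall n a ha)⟩
  obtain ⟨c, hc''⟩ : ∃ c, N''.L s φ = some c := by
    cases h : N''.L s φ with
    | none => exact absurd h (h''.1.2 s (hSsub hsN) φ hφF)
    | some x => exact ⟨x, rfl⟩
  have hciff : c = true ↔ N''.Sat φ s := by
    rw [← h''.2 s (hSsub hsN) φ hφF, hc'']; simp
  have hbiff : b = true ↔ N.Sat φ s := by
    rw [← hN.2 s hsN φ hφF, hL]; simp
  have hcb : c = b := by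
    have := hciff.trans (hsatEq.trans hbiff.symm)
    cases b <;> cases c <;> simp_all
  rw [hc'', hcb]

open Classical in
theorem proof_sub_completion {N : Model σ P F} {π : σ → Formula P → Bool → Model σ P F}
    (hπ : IsProof N π) : Submodel N (completion N) := by
  have hstep : ∀ (φ : Formula P), Formula.Compound φ →
      (∀ ψ ∈ Formula.children φ, ∀ (t : σ) c, N.L t ψ = some c →
        (completion N).L t ψ = some c) →
      ∀ (s : σ) b, N.L s φ = some b → (completion N).L s φ = some b := by
    intro φ hcomp hch s b h
    obtain ⟨hsub, hev⟩ := hπ s φ b h hcomp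
    obtain ⟨hS, hC, hR, hLsub, hT⟩ := hsub
    refine hev.2.2 (completion N) (completion_sound N) ?_
    refine ⟨hS, fun x hx => N.C_sub (hC hx), hR, ?_, hT⟩
    intro t ψ c hlc
    exact hch ψ (hev.2.1 t ψ (by simp [hlc])) t c (hLsub t ψ c hlc)
  have hmain : ∀ (φ : Formula P) (s : σ) b, N.L s φ = some b →
      (completion N).L s φ = some b := by
    intro φ
    induction φ with
    | prop p =>
      intro s b h
      have hd := N.L_dom s (Formula.prop p) (by rw [h]; simp)
      show (if s ∈ N.S ∧ Formula.prop p ∈ F then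
          some (decide ((propBase N).Sat (.prop p) s)) else none) = some b
      rw [if_pos hd]
      have hbase : (propBase N).L s (.prop p)
          = some ((N.L s (.prop p)).getD false) := by
        show (if s ∈ N.S ∧ Formula.prop p ∈ F then _ else none) = _
        rw [if_pos hd]
      have hsat : (propBase N).Sat (.prop p) s ↔ b = true := by
        show (propBase N).L s (.prop p) = some true ↔ _
        rw [hbase, h]
        simp
      cases b <;> simp_all
    | tt => exact hstep _ trivial (by intro ψ hψ; simp [Formula.children] at hψ)
    | neg ψ ih =>
      refine hstep _ trivial ?_
      intro ψ' hψ'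
      simp only [Formula.children, Set.mem_singleton_iff] at hψ'
      subst hψ'; exact ih
    | or ψ₁ ψ₂ ih₁ ih₂ =>
      refine hstep _ trivial ?_
      intro ψ' hψ'
      simp only [Formula.children, Set.mem_insert_iff, Set.mem_singleton_iff] at hψ'
      rcases hψ' with h | h <;> subst h
      · exact ih₁
      · exact ih₂
    | EX ψ ih =>
      refine hstep _ trivial ?_
      intro ψ' hψ'
      simp only [Formula.children, Set.mem_singleton_iff] at hψ'
      subst hψ'; exact ih
    | EU ψ₁ ψ₂ ih₁ ih₂ =>
      refine hstep _ trivial ?_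
      intro ψ' hψ'
      simp only [Formula.children, Set.mem_insert_iff, Set.mem_singleton_iff] at hψ'
      rcases hψ' with h | h <;> subst h
      · exact ih₁
      · exact ih₂
    | EG ψ ih =>
      refine hstep _ trivial ?_
      intro ψ' hψ'
      simp only [Formula.children, Set.mem_singleton_iff] at hψ'
      subst hψ'; exact ih
  exact ⟨subset_rfl, N.C_sub, subset_rfl, fun s φ b => hmain φ s b,
    fun p hp hnp => (hnp hp).elim⟩

end Aux

/-- A model `M` over `F` is consistent iff `M ⊑ N` for some proof
`⟨N,π⟩` over `F`. -/
theorem consistent_iff_submodel_of_proof {σ P : Type} [Countable P] {F : Set (Formula P)}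
    (hF : SubformulaClosed F) (M : Model σ P F) :
    Consistent M ↔ ∃ (N : Model σ P F) (π : σ → Formula P → Bool → Model σ P F),
      IsProof N π ∧ Submodel M N := by
  constructor
  · rintro ⟨N, hN, hMN⟩
    refine ⟨N, fun s φ _ => N.restrictL (Formula.children φ), ?_, hMN⟩
    intro s φ b hL hcomp
    exact ⟨restrict_sub N _, forcing hF hN hL hcomp⟩
  · rintro ⟨N, π, hπ, hMN⟩
    exact ⟨completion N, completion_sound N, submodel_trans hMN (proof_sub_completion hπ)⟩

end CTLviz
end

section
/- Let M₁ ⊑ M₂ be models over a subformula-closed set F of CTL formulas, and let s ∈ S₁. For every maximal path ρ of M₁ starting at s there is a maximal path ρ' of M₂ starting at s such that ρ is a prefix of ρ'; moreover, if ρ is finite and its last state lies in C₁, then ρ = ρ'. -/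
namespace CTLviz

theorem FSeq_none_mono {σ : Type} {ρ : FSeq σ} {n j : ℕ} (h : ρ.get n = none) (hj : n ≤ j) :
    ρ.get j = none := by
  induction j, hj using Nat.le_induction with
  | base => exact h
  | succ j hj ih => exact ρ.down j ih

theorem FSeq_some_of_le {σ : Type} {ρ : FSeq σ} {n k : ℕ} {a : σ}
    (h : ρ.get k = some a) (hn : n ≤ k) : ∃ b, ρ.get n = some b := by
  cases hb : ρ.get n with
  | none => rw [FSeq_none_mono hb hn] at h; exact absurd h (by simp)
  | some b => exact ⟨b, rfl⟩

/-- A path whose every "end" has no successor is maximal. -/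
theorem maximal_of_endblocked {σ P : Type} {F : Set (Formula P)} (M : Model σ P F)
    (s : σ) (ρ : FSeq σ) (hp : M.IsPath s ρ)
    (hend : ∀ n a, ρ.get n = some a → ρ.get (n + 1) = none → ∀ b, (a, b) ∉ M.R) :
    M.IsMaxPath s ρ := by
  refine ⟨hp, fun ρ' hρ' hpre => FSeq.ext' fun n => ?_⟩
  induction n with
  | zero => rw [hρ'.1, hp.1]
  | succ n ih =>
    cases hv : ρ.get (n + 1) with
    | some a => exact hpre _ _ hv
    | none =>
      cases hu : ρ.get n with
      | none =>
        have h1 : ρ'.get n = none := by rw [ih, hu]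
        rw [ρ'.down n h1]
      | some a =>
        have h1 : ρ'.get n = some a := hpre _ _ hu
        cases hw : ρ'.get (n + 1) with
        | none => rfl
        | some b => exact absurd (hρ'.2.2 n a b h1 hw) (hend n a hu hv b)

/-- The last state of a finite maximal path has no successors. -/
theorem last_no_succ {σ P : Type} {F : Set (Formula P)} (M : Model σ P F)
    (s : σ) (ρ : FSeq σ) (hρ : M.IsMaxPath s ρ) {k : ℕ} {a : σ}
    (hk : ρ.get k = some a) (hk1 : ρ.get (k + 1) = none) :
    ∀ b, (a, b) ∉ M.R := by
  intro b hb
  have hdown : ∀ n, (if n ≤ k then ρ.get n else if n = k + 1 then some b else none) = none →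
      (if n + 1 ≤ k then ρ.get (n + 1) else if n + 1 = k + 1 then some b else none) = none := by
    intro n hn
    by_cases h1 : n ≤ k
    · rw [if_pos h1] at hn
      obtain ⟨c, hc⟩ := FSeq_some_of_le hk h1
      rw [hc] at hn; exact absurd hn (by simp)
    · rw [if_neg h1] at hn
      by_cases h2 : n = k + 1
      · rw [if_pos h2] at hn; exact absurd hn (by simp)
      · rw [if_neg (by omega), if_neg (by omega)]
  set ρ₂ : FSeq σ := ⟨fun n => if n ≤ k then ρ.get n else if n = k + 1 then some b else none,
    hdown⟩ with hρ₂
  have hget : ∀ n, ρ₂.get n = if n ≤ k then ρ.get n else if n = k + 1 then some b else none :=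
    fun n => rfl
  have hpath : M.IsPath s ρ₂ := by
    refine ⟨by rw [hget, if_pos (Nat.zero_le k)]; exact hρ.1.1, ?_, ?_⟩
    · intro n c hc
      rw [hget] at hc
      by_cases h1 : n ≤ k
      · rw [if_pos h1] at hc; exact hρ.1.2.1 n c hc
      · rw [if_neg h1] at hc
        by_cases h2 : n = k + 1
        · rw [if_pos h2] at hc
          cases hc; exact (M.R_sub _ hb).2
        · rw [if_neg h2] at hc; exact absurd hc (by simp)
    · intro n c d hc hd
      rw [hget] at hc hd
      by_cases h1 : n + 1 ≤ k
      · rw [if_pos (by omega : n ≤ k)] at hc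
        rw [if_pos h1] at hd
        exact hρ.1.2.2 n c d hc hd
      · by_cases h2 : n + 1 = k + 1
        · rw [if_pos (by omega : n ≤ k)] at hc
          rw [if_neg h1, if_pos h2] at hd
          have hnk : n = k := by omega
          subst hnk
          rw [hk] at hc; cases hc; cases hd; exact hb
        · rw [if_neg h1, if_neg h2] at hd; exact absurd hd (by simp)
  have hpre : ρ.IsPrefix ρ₂ := by
    intro n c hc
    have hnk : n ≤ k := by
      by_contra hcon
      rw [FSeq_none_mono hk1 (by omega : k + 1 ≤ n)] at hc
      exact absurd hc (by simp)
    rw [hget, if_pos hnk]; exact hc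
  have := hρ.2 ρ₂ hpath hpre
  have h2 : ρ₂.get (k + 1) = some b := by
    rw [hget, if_neg (by omega), if_pos rfl]
  rw [this, hk1] at h2
  exact absurd h2 (by simp)

open Classical in
/-- Greedy extension sequence in a model, starting at `s`. -/
noncomputable def extSeq {σ P : Type} {F : Set (Formula P)} (M : Model σ P F) (s : σ) :
    ℕ → Option σ
  | 0 => some s
  | n + 1 =>
    match extSeq M s n with
    | none => none
    | some a => if h : ∃ b, (a, b) ∈ M.R then some h.choose else none

theorem extSeq_down {σ P : Type} {F : Set (Formula P)} (M : Model σ P F) (s : σ)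
    {n : ℕ} (h : extSeq M s n = none) : extSeq M s (n + 1) = none := by
  simp only [extSeq, h]

theorem extSeq_zero {σ P : Type} {F : Set (Formula P)} (M : Model σ P F) (s : σ) :
    extSeq M s 0 = some s := rfl

theorem extSeq_mem {σ P : Type} {F : Set (Formula P)} (M : Model σ P F) {s : σ}
    (hs : s ∈ M.S) : ∀ n a, extSeq M s n = some a → a ∈ M.S := by
  intro n
  induction n with
  | zero => intro a ha; cases ha; exact hs
  | succ n ih =>
    intro a ha
    cases hu : extSeq M s n with
    | none => simp only [extSeq, hu] at ha; exact absurd ha (by simp)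
    | some c =>
      simp only [extSeq, hu] at ha
      by_cases hex : ∃ b, (c, b) ∈ M.R
      · rw [dif_pos hex] at ha
        cases ha; exact (M.R_sub _ hex.choose_spec).2
      · rw [dif_neg hex] at ha; exact absurd ha (by simp)

theorem extSeq_step {σ P : Type} {F : Set (Formula P)} (M : Model σ P F) (s : σ) :
    ∀ n a b, extSeq M s n = some a → extSeq M s (n + 1) = some b → (a, b) ∈ M.R := by
  intro n a b ha hb
  simp only [extSeq, ha] at hb
  by_cases hex : ∃ c, (a, c) ∈ M.R
  · rw [dif_pos hex] at hb; cases hb; exact hex.choose_spec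
  · rw [dif_neg hex] at hb; exact absurd hb (by simp)

theorem extSeq_end {σ P : Type} {F : Set (Formula P)} (M : Model σ P F) (s : σ) :
    ∀ n a, extSeq M s n = some a → extSeq M s (n + 1) = none → ∀ b, (a, b) ∉ M.R := by
  intro n a ha hn b hb
  simp only [extSeq, ha] at hn
  rw [dif_pos ⟨b, hb⟩] at hn
  exact absurd hn (by simp)

/-- If `M₁ ⊑ M₂` and `s ∈ S₁`, every maximal path `ρ` of `M₁` from `s`
is a prefix of some maximal path `ρ'` of `M₂` from `s`; if moreover `ρ` is finite with
last state in `C₁`, then `ρ' = ρ`. -/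
theorem maxpath_extends_in_supermodel {σ P : Type} [Countable P] {F : Set (Formula P)}
    (hF : SubformulaClosed F) (M₁ M₂ : Model σ P F) (h : Submodel M₁ M₂)
    (s : σ) (hs : s ∈ M₁.S) (ρ : FSeq σ) (hρ : M₁.IsMaxPath s ρ) :
    ∃ ρ' : FSeq σ, M₂.IsMaxPath s ρ' ∧ ρ.IsPrefix ρ' ∧
      ((∃ n a, ρ.get n = some a ∧ ρ.get (n + 1) = none ∧ a ∈ M₁.C) → ρ' = ρ) := by
  classical
  obtain ⟨⟨h0, hSmem, hRstep⟩, hmax⟩ := hρ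
  have hpath2 : M₂.IsPath s ρ :=
    ⟨h0, fun n a ha => h.1 (hSmem n a ha), fun n a b ha hb => h.2.2.1 (hRstep n a b ha hb)⟩
  by_cases hfin : ∃ m, ρ.get m = none
  · -- ρ is finite; find its last position k
    have hm0 : Nat.find hfin ≠ 0 := by
      intro hc
      have := Nat.find_spec hfin
      rw [hc, h0] at this
      exact absurd this (by simp)
    obtain ⟨k, hkeq⟩ : ∃ k, Nat.find hfin = k + 1 := ⟨Nat.find hfin - 1, by omega⟩
    have hk1 : ρ.get (k + 1) = none := hkeq ▸ Nat.find_spec hfin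
    obtain ⟨a, hk⟩ : ∃ a, ρ.get k = some a := by
      cases hc : ρ.get k with
      | none => exact absurd (hc ▸ Nat.find_min hfin (by omega : k < Nat.find hfin)) (by simp)
      | some a => exact ⟨a, rfl⟩
    have hsome : ∀ n ≤ k, ∃ b, ρ.get n = some b := fun n hn => FSeq_some_of_le hk hn
    have hnone : ∀ n, k + 1 ≤ n → ρ.get n = none := fun n hn => FSeq_none_mono hk1 hn
    have hnos₁ : ∀ b, (a, b) ∉ M₁.R := last_no_succ M₁ s ρ ⟨⟨h0, hSmem, hRstep⟩, hmax⟩ hk hk1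
    by_cases hsucc2 : ∃ b, (a, b) ∈ M₂.R
    · -- a has a successor in M₂: extend greedily; a ∉ C₁
      obtain ⟨b, hb⟩ := hsucc2
      have hC : a ∉ M₁.C := h.2.2.2.2 (a, b) hb (hnos₁ b)
      have haS : a ∈ M₂.S := h.1 (hSmem k a hk)
      have hdown : ∀ n, (if n < k then ρ.get n else extSeq M₂ a (n - k)) = none →
          (if n + 1 < k then ρ.get (n + 1) else extSeq M₂ a (n + 1 - k)) = none := by
        intro n hn
        by_cases h1 : n < k
        · rw [if_pos h1] at hn
          obtain ⟨c, hc⟩ := hsome n (by omega)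
          rw [hc] at hn; exact absurd hn (by simp)
        · rw [if_neg h1] at hn
          rw [if_neg (by omega), show n + 1 - k = (n - k) + 1 by omega]
          exact extSeq_down M₂ a hn
      set ρ' : FSeq σ := ⟨fun n => if n < k then ρ.get n else extSeq M₂ a (n - k), hdown⟩
        with hρ'def
      have hget : ∀ n, ρ'.get n = if n < k then ρ.get n else extSeq M₂ a (n - k) := fun n => rfl
      have hagree : ∀ n ≤ k, ρ'.get n = ρ.get n := by
        intro n hn
        rw [hget]
        by_cases h1 : n < k
        · rw [if_pos h1]
        · have : n = k := by omega
          subst this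
          rw [if_neg h1, Nat.sub_self, extSeq_zero, hk]
      have hpath' : M₂.IsPath s ρ' := by
        refine ⟨by rw [hagree 0 (Nat.zero_le k)]; exact h0, ?_, ?_⟩
        · intro n c hc
          rw [hget] at hc
          by_cases h1 : n < k
          · rw [if_pos h1] at hc; exact h.1 (hSmem n c hc)
          · rw [if_neg h1] at hc; exact extSeq_mem M₂ haS _ c hc
        · intro n c d hc hd
          by_cases h1 : n + 1 ≤ k
          · rw [hagree n (by omega)] at hc
            rw [hagree (n + 1) h1] at hd
            exact h.2.2.1 (hRstep n c d hc hd)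
          · rw [hget, if_neg (by omega)] at hc hd
            rw [show n + 1 - k = (n - k) + 1 by omega] at hd
            exact extSeq_step M₂ a _ c d hc hd
      refine ⟨ρ', maximal_of_endblocked M₂ s ρ' hpath' ?_, ?_, ?_⟩
      · intro n c hc hn bb hbb
        by_cases h1 : n + 1 ≤ k
        · rw [hagree (n + 1) h1] at hn
          obtain ⟨e, he⟩ := hsome (n + 1) h1
          rw [he] at hn; exact absurd hn (by simp)
        · rw [hget, if_neg (by omega)] at hc hn
          rw [show n + 1 - k = (n - k) + 1 by omega] at hn
          exact extSeq_end M₂ a _ c hc hn bb hbb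
      · intro n c hc
        have hn : n ≤ k := by
          by_contra hcon
          rw [hnone n (by omega)] at hc
          exact absurd hc (by simp)
        rw [hagree n hn]; exact hc
      · rintro ⟨n, c, hc1, hc2, hc3⟩
        have hn1 : n ≤ k := by
          by_contra hcon
          rw [hnone n (by omega)] at hc1
          exact absurd hc1 (by simp)
        have hn2 : n = k := by
          by_contra hcon
          obtain ⟨e, he⟩ := hsome (n + 1) (by omega)
          rw [he] at hc2; exact absurd hc2 (by simp)
        subst hn2
        rw [hk] at hc1; cases hc1
        exact absurd hc3 hC
    · -- a has no successor even in M₂: ρ itself is maximal in M₂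
      push_neg at hsucc2
      refine ⟨ρ, maximal_of_endblocked M₂ s ρ hpath2 ?_, fun n c hc => hc, fun _ => rfl⟩
      intro n c hc hn bb hbb
      have hn1 : n ≤ k := by
        by_contra hcon
        rw [hnone n (by omega)] at hc
        exact absurd hc (by simp)
      have hn2 : n = k := by
        by_contra hcon
        obtain ⟨e, he⟩ := hsome (n + 1) (by omega)
        rw [he] at hn; exact absurd hn (by simp)
      subst hn2
      rw [hk] at hc; cases hc
      exact hsucc2 bb hbb
  · -- ρ is infinite: it is maximal in M₂
    push_neg at hfin
    refine ⟨ρ, maximal_of_endblocked M₂ s ρ hpath2 ?_, fun n c hc => hc, fun _ => rfl⟩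
    intro n c hc hn
    exact absurd hn (hfin (n + 1))

end CTLviz
end

section
/- Let F be a subformula-closed set of CTL formulas and let M be a full model over F. For all states s ∈ S and all compound formulas φ ∈ F, exactly one of the conditions W_M(s,φ) and C_M(s,φ) holds. -/
namespace CTLviz

/-- In a full model, for every state `s` and compound `φ ∈ F`, exactly
one of `W_M(s,φ)` and `C_M(s,φ)` holds. -/
theorem W_C_complementary {σ P : Type} [Countable P] {F : Set (Formula P)}
    (hF : SubformulaClosed F) (M : Model σ P F) (hfull : M.Full)
    (s : σ) (hs : s ∈ M.S) (φ : Formula P) (hφ : φ ∈ F) (hcomp : Formula.Compound φ) :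
    (M.W s φ ∧ ¬ M.Cc s φ) ∨ (¬ M.W s φ ∧ M.Cc s φ) := by
  have htot : ∀ t ∈ M.S, ∀ ψ ∈ F, M.L t ψ = some true ∨ M.L t ψ = some false := by
    intro t ht ψ hψ
    cases hb : M.L t ψ with
    | none => exact absurd hb (hfull.2 t ht ψ hψ)
    | some b => cases b <;> simp
  have hC : ∀ t ∈ M.S, t ∈ M.C := fun t ht => hfull.1 ▸ ht
  cases φ with
  | prop p => exact absurd hcomp (by simp [Formula.Compound])
  | tt =>
      left
      exact ⟨trivial, fun h => h⟩
  | neg ψ =>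
      have hψ : ψ ∈ F := hF _ hφ (by simp [Formula.children])
      rcases htot s hs ψ hψ with h | h
      · right
        refine ⟨?_, h⟩
        simp only [Model.W]
        rw [h]; simp
      · left
        refine ⟨h, ?_⟩
        simp only [Model.Cc]
        rw [h]; simp
  | or ψ₁ ψ₂ =>
      have hψ₁ : ψ₁ ∈ F := hF _ hφ (by simp [Formula.children])
      have hψ₂ : ψ₂ ∈ F := hF _ hφ (by simp [Formula.children])
      rcases htot s hs ψ₁ hψ₁ with h1 | h1
      · left
        refine ⟨Or.inl h1, ?_⟩
        simp only [Model.Cc]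
        rintro ⟨h1', _⟩
        rw [h1] at h1'; exact absurd h1' (by simp)
      · rcases htot s hs ψ₂ hψ₂ with h2 | h2
        · left
          refine ⟨Or.inr h2, ?_⟩
          simp only [Model.Cc]
          rintro ⟨_, h2'⟩
          rw [h2] at h2'; exact absurd h2' (by simp)
        · right
          refine ⟨?_, h1, h2⟩
          simp only [Model.W]
          rintro (h | h)
          · rw [h1] at h; exact absurd h (by simp)
          · rw [h2] at h; exact absurd h (by simp)
  | EX ψ =>
      have hψ : ψ ∈ F := hF _ hφ (by simp [Formula.children])
      have hsucc : ∀ t ∈ M.succ s, t ∈ M.S := fun t ht => (M.R_sub _ ht).2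
      by_cases hW : ∃ t ∈ M.succ s, M.L t ψ = some true
      · left
        refine ⟨hW, ?_⟩
        rintro ⟨_, hall⟩
        obtain ⟨t, ht, htrue⟩ := hW
        have := hall t ht
        rw [htrue] at this; exact absurd this (by simp)
      · right
        refine ⟨hW, hC s hs, fun t ht => ?_⟩
        rcases htot t (hsucc t ht) ψ hψ with h | h
        · exact absurd ⟨t, ht, h⟩ hW
        · exact h
  | EU ψ₁ ψ₂ =>
      have hψ₁ : ψ₁ ∈ F := hF _ hφ (by simp [Formula.children])
      have hψ₂ : ψ₂ ∈ F := hF _ hφ (by simp [Formula.children])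
      by_cases hW : M.W s (Formula.EU ψ₁ ψ₂)
      · left
        refine ⟨hW, ?_⟩
        intro hCc
        obtain ⟨ρ, hρ, n, b, hget, hb2, hbefore⟩ := hW
        rcases hCc ρ hρ with h | ⟨m, c, hgetm, hc1, hc2, hbef⟩
        · have := (h n b hget).2
          rw [hb2] at this; exact absurd this (by simp)
        · rcases lt_trichotomy m n with hmn | hmn | hmn
          · have := hbefore m hmn c hgetm
            rw [hc1] at this; exact absurd this (by simp)
          · subst hmn
            rw [hget] at hgetm
            cases hgetm
            rw [hb2] at hc2; exact absurd hc2 (by simp)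
          · have := (hbef n hmn b hget).2
            rw [hb2] at this; exact absurd this (by simp)
      · right
        refine ⟨hW, ?_⟩
        intro ρ hρ
        have hstates : ∀ n a, ρ.get n = some a → a ∈ M.S := hρ.1.2.1
        by_cases hex : ∃ n a, ρ.get n = some a ∧ M.L a ψ₂ = some true
        · classical
          have hpex : ∃ n, ∃ a, ρ.get n = some a ∧ M.L a ψ₂ = some true := by
            obtain ⟨n, a, h1, h2⟩ := hex; exact ⟨n, a, h1, h2⟩
          obtain ⟨a, hget, hatrue⟩ := Nat.find_spec hpex
          set n := Nat.find hpex with hn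
          have hminbelow : ∀ i < n, ∀ c, ρ.get i = some c → M.L c ψ₂ = some false := by
            intro i hi c hg
            rcases htot c (hstates i c hg) ψ₂ hψ₂ with h | h
            · exact absurd ⟨c, hg, h⟩ (Nat.find_min hpex hi)
            · exact h
          have hnoW : ¬ ∀ i < n, ∀ c, ρ.get i = some c → M.L c ψ₁ = some true := by
            intro hall; exact hW ⟨ρ, hρ, n, a, hget, hatrue, hall⟩
          push_neg at hnoW
          obtain ⟨i, hi, c, hg, hne⟩ := hnoW
          have hc1 : M.L c ψ₁ = some false := by
            rcases htot c (hstates i c hg) ψ₁ hψ₁ with h | h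
            · exact absurd h hne
            · exact h
          right
          exact ⟨i, c, hg, hc1, hminbelow i hi c hg,
            fun j hj d hd => ⟨hC d (hstates j d hd), hminbelow j (hj.trans hi) d hd⟩⟩
        · left
          intro n a hget
          refine ⟨hC a (hstates n a hget), ?_⟩
          rcases htot a (hstates n a hget) ψ₂ hψ₂ with h | h
          · exact absurd ⟨n, a, hget, h⟩ hex
          · exact h
  | EG ψ =>
      have hψ : ψ ∈ F := hF _ hφ (by simp [Formula.children])
      by_cases hW : M.W s (Formula.EG ψ)
      · left
        refine ⟨hW, ?_⟩
        intro hCc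
        obtain ⟨ρ, hρ, hall, _⟩ := hW
        obtain ⟨n, b, hget, hfalse, _⟩ := hCc ρ hρ
        have := hall n b hget
        rw [hfalse] at this; exact absurd this (by simp)
      · right
        refine ⟨hW, ?_⟩
        intro ρ hρ
        have hstates : ∀ n a, ρ.get n = some a → a ∈ M.S := hρ.1.2.1
        by_cases hall : ∀ n a, ρ.get n = some a → M.L a ψ = some true
        · exact absurd ⟨ρ, hρ, hall, fun n a hg _ => hC a (hstates n a hg)⟩ hW
        · push_neg at hall
          obtain ⟨n, a, hget, hne⟩ := hall
          rcases htot a (hstates n a hget) ψ hψ with h | h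
          · exact absurd h hne
          · exact ⟨n, a, hget, h, fun i _ c hg => hC c (hstates i c hg)⟩


end CTLviz
end

section
/- Let F be a subformula-closed set of CTL formulas and let M ⊑ N be models over F. For all states s of M and compound formulas φ ∈ F: if W_M(s,φ) holds then W_N(s,φ) holds, and if C_M(s,φ) holds then C_N(s,φ) holds. -/
namespace CTLviz

section Aux

variable {σ P : Type} {F : Set (Formula P)}

lemma FSeq.none_mono (ρ : FSeq σ) {i j : ℕ} (hij : i ≤ j) (h : ρ.get i = none) :
    ρ.get j = none := by
  induction j, hij using Nat.le_induction with
  | base => exact h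
  | succ n hn ih => exact ρ.down n ih

lemma FSeq.some_of_le (ρ : FSeq σ) {i n : ℕ} {a : σ} (hin : i ≤ n)
    (h : ρ.get n = some a) : ∃ b, ρ.get i = some b := by
  cases hb : ρ.get i with
  | none => rw [ρ.none_mono hin hb] at h; exact absurd h (by simp)
  | some b => exact ⟨b, rfl⟩

/-- In a maximal path, a terminal entry has no successors. -/
lemma maxpath_terminal {M : Model σ P F} {s : σ} {ρ : FSeq σ} (h : M.IsMaxPath s ρ)
    {n : ℕ} {a : σ} (ha : ρ.get n = some a) (hend : ρ.get (n + 1) = none) :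
    ∀ b, (a, b) ∉ M.R := by
  intro b hb
  have hρn2 : ρ.get (n + 2) = none := ρ.down _ hend
  refine absurd ?_ (show ρ.get (n+1) ≠ some b by rw [hend]; simp)
  set ρ' : FSeq σ :=
    ⟨fun k => if k = n + 1 then some b else ρ.get k, by
      intro k hk
      by_cases h1 : k = n + 1
      · simp [h1] at hk
      · simp only [if_neg h1] at hk
        by_cases h2 : k + 1 = n + 1
        · have : k = n := by omega
          rw [this] at hk; rw [ha] at hk; exact absurd hk (by simp)
        · simpa [show k ≠ n by omega] using ρ.down k hk⟩ with hρ'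
  have hget : ∀ k, ρ'.get k = if k = n + 1 then some b else ρ.get k := fun k => rfl
  have hpath : M.IsPath s ρ' := by
    refine ⟨?_, ?_, ?_⟩
    · rw [hget]; simp only [if_neg (by omega : ¬ (0 = n+1))]; exact h.1.1
    · intro k c hc
      rw [hget] at hc
      by_cases h1 : k = n + 1
      · rw [if_pos h1] at hc
        have hcb : b = c := by simpa using hc
        exact hcb ▸ (M.R_sub _ hb).2
      · rw [if_neg h1] at hc; exact h.1.2.1 k c hc
    · intro k c d hc hd
      rw [hget] at hc hd
      by_cases h2 : k + 1 = n + 1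
      · rw [if_pos h2] at hd
        have hkn : k = n := by omega
        rw [if_neg (by omega), hkn, ha] at hc
        have h3 : a = c := by simpa using hc
        have h4 : b = d := by simpa using hd
        rw [← h3, ← h4]
        simpa using hb
      · rw [if_neg h2] at hd
        by_cases h1 : k = n + 1
        · rw [h1] at hd
          rw [hρn2] at hd; exact absurd hd (by simp)
        · rw [if_neg h1] at hc; exact h.1.2.2 k c d hc hd
  have hpre : ρ.IsPrefix ρ' := by
    intro k c hc
    rw [hget]
    by_cases h1 : k = n + 1
    · rw [h1, hend] at hc; exact absurd hc (by simp)
    · rw [if_neg h1]; exact hc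
  have := h.2 ρ' hpath hpre
  rw [← this, hget]; simp

/-- A path whose terminal entries have no successors is maximal. -/
lemma isMaxPath_of_terminal {M : Model σ P F} {s : σ} {ρ : FSeq σ} (hp : M.IsPath s ρ)
    (hterm : ∀ n a, ρ.get n = some a → ρ.get (n + 1) = none → ∀ b, (a, b) ∉ M.R) :
    M.IsMaxPath s ρ := by
  refine ⟨hp, fun ρ' hp' hpre => FSeq.ext' fun n => ?_⟩
  induction n with
  | zero => rw [hp'.1, hp.1]
  | succ n ih =>
    cases hn : ρ.get (n + 1) with
    | some a => rw [hpre _ _ hn]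
    | none =>
      cases hn' : ρ'.get (n + 1) with
      | none => rfl
      | some b =>
        exfalso
        cases hg : ρ.get n with
        | none =>
          have h1 : ρ'.get n = none := by rw [ih, hg]
          rw [ρ'.down n h1] at hn'; exact absurd hn' (by simp)
        | some a =>
          have h1 : ρ'.get n = some a := hpre _ _ hg
          exact hterm n a hg hn b (hp'.2.2 n a b h1 hn')

/-- A path of a submodel is a path of the supermodel. -/
lemma isPath_mono {M N : Model σ P F} (h : Submodel M N) {s : σ} {ρ : FSeq σ}
    (hp : M.IsPath s ρ) : N.IsPath s ρ :=
  ⟨hp.1, fun n a ha => h.1 (hp.2.1 n a ha),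
    fun n a b ha hb => h.2.2.1 (hp.2.2 n a b ha hb)⟩

open Classical in
/-- Greedy extension of a sequence to a maximal path. -/
noncomputable def extendFun (M : Model σ P F) (ρ : FSeq σ) : ℕ → Option σ
  | 0 => ρ.get 0
  | n + 1 =>
    match ρ.get (n + 1) with
    | some a => some a
    | none =>
      match extendFun M ρ n with
      | none => none
      | some a => if h : ∃ b, (a, b) ∈ M.R then some h.choose else none

lemma extendFun_of_get {M : Model σ P F} {ρ : FSeq σ} {n : ℕ} {a : σ}
    (h : ρ.get n = some a) : extendFun M ρ n = some a := by
  cases n with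
  | zero => simpa [extendFun]
  | succ n => simp [extendFun, h]

lemma extendFun_down (M : Model σ P F) (ρ : FSeq σ) (n : ℕ)
    (h : extendFun M ρ n = none) : extendFun M ρ (n + 1) = none := by
  have hn : ρ.get n = none := by
    cases hg : ρ.get n with
    | none => rfl
    | some a => rw [extendFun_of_get hg] at h; exact absurd h (by simp)
  have hn1 : ρ.get (n + 1) = none := ρ.down n hn
  simp [extendFun, hn1, h]

open Classical in
/-- Every path extends to a maximal path. -/
lemma exists_max_extension (M : Model σ P F) {s : σ} {ρ : FSeq σ} (hp : M.IsPath s ρ) :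
    ∃ ρ' : FSeq σ, M.IsMaxPath s ρ' ∧ ρ.IsPrefix ρ' := by
  set ρ' : FSeq σ := ⟨extendFun M ρ, extendFun_down M ρ⟩ with hρ'
  have hget : ∀ k, ρ'.get k = extendFun M ρ k := fun _ => rfl
  have hS : ∀ n a, ρ'.get n = some a → a ∈ M.S := by
    intro n
    induction n with
    | zero =>
      intro a ha
      rw [hget] at ha
      simp only [extendFun] at ha
      exact hp.2.1 0 a ha
    | succ n ih =>
      intro a ha
      rw [hget] at ha
      simp only [extendFun] at ha
      cases hg : ρ.get (n + 1) with
      | some c =>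
        rw [hg] at ha
        simp only at ha
        exact (Option.some_inj.mp ha) ▸ hp.2.1 (n + 1) c hg
      | none =>
        rw [hg] at ha
        simp only at ha
        cases he : extendFun M ρ n with
        | none => rw [he] at ha; exact absurd ha (by simp)
        | some c =>
          rw [he] at ha
          simp only at ha
          by_cases hc : ∃ b, (c, b) ∈ M.R
          · rw [dif_pos hc] at ha
            have h5 := hc.choose_spec
            rw [Option.some_inj.mp ha] at h5
            exact (M.R_sub _ h5).2
          · rw [dif_neg hc] at ha; exact absurd ha (by simp)
  have hR : ∀ n a b, ρ'.get n = some a → ρ'.get (n + 1) = some b → (a, b) ∈ M.R := by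
    intro n a b ha hb
    rw [hget] at ha hb
    simp only [extendFun] at hb
    cases hg : ρ.get (n + 1) with
    | some c =>
      rw [hg] at hb
      simp only at hb
      obtain ⟨a', ha'⟩ := ρ.some_of_le (Nat.le_succ n) hg
      rw [extendFun_of_get ha'] at ha
      have h6 : a' = a := Option.some_inj.mp ha
      have h7 : c = b := Option.some_inj.mp hb
      rw [← h6, ← h7]
      exact hp.2.2 n a' c ha' hg
    | none =>
      rw [hg] at hb
      simp only at hb
      rw [ha] at hb
      simp only at hb
      by_cases hc : ∃ b', (a, b') ∈ M.R
      · rw [dif_pos hc] at hb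
        have := hc.choose_spec
        rwa [Option.some_inj.mp hb] at this
      · rw [dif_neg hc] at hb; exact absurd hb (by simp)
  have hpath : M.IsPath s ρ' := by
    refine ⟨?_, hS, hR⟩
    rw [hget]; simp only [extendFun]; exact hp.1
  refine ⟨ρ', isMaxPath_of_terminal hpath ?_, fun n a ha => extendFun_of_get ha⟩
  intro n a ha hend b hb
  rw [hget] at ha hend
  simp only [extendFun] at hend
  have hg : ρ.get (n + 1) = none := by
    cases hg : ρ.get (n + 1) with
    | none => rfl
    | some c => rw [hg] at hend; exact absurd hend (by simp)
  rw [hg, ha] at hend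
  simp only at hend
  rw [dif_pos ⟨b, hb⟩] at hend
  exact absurd hend (by simp)

/-- Truncation of a sequence at position `k`. -/
def FSeq.trunc (ρ : FSeq σ) (k : ℕ) : FSeq σ :=
  ⟨fun i => if i ≤ k then ρ.get i else none, by
    intro n hn
    by_cases h1 : n + 1 ≤ k
    · rw [if_pos h1]
      rw [if_pos (by omega)] at hn
      exact ρ.down n hn
    · rw [if_neg h1]⟩

lemma FSeq.trunc_get (ρ : FSeq σ) (k i : ℕ) :
    (ρ.trunc k).get i = if i ≤ k then ρ.get i else none := rfl

lemma isPath_trunc {M : Model σ P F} {s : σ} {ρ : FSeq σ} (hp : M.IsPath s ρ) (k : ℕ) :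
    M.IsPath s (ρ.trunc k) := by
  refine ⟨?_, ?_, ?_⟩
  · rw [FSeq.trunc_get, if_pos (by omega)]; exact hp.1
  · intro i c hc
    rw [FSeq.trunc_get] at hc
    by_cases h1 : i ≤ k
    · rw [if_pos h1] at hc; exact hp.2.1 i c hc
    · rw [if_neg h1] at hc; exact absurd hc (by simp)
  · intro i c d hc hd
    rw [FSeq.trunc_get] at hc hd
    by_cases h2 : i + 1 ≤ k
    · rw [if_pos h2] at hd
      rw [if_pos (by omega)] at hc
      exact hp.2.2 i c d hc hd
    · rw [if_neg h2] at hd; exact absurd hd (by simp)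

/-- Key covering lemma for counterexample conditions: a maximal path of `N`
either is a maximal path of `M`, or passes through a state outside `M.C`
while agreeing up to there with a maximal path of `M`. -/
lemma max_cover {M N : Model σ P F} (h : Submodel M N) {s : σ} {ρ : FSeq σ}
    (hs : s ∈ M.S) (hρ : N.IsMaxPath s ρ) :
    M.IsMaxPath s ρ ∨
    ∃ k a ρ', ρ.get k = some a ∧ a ∉ M.C ∧ M.IsMaxPath s ρ' ∧
      ∀ i ≤ k, ρ'.get i = ρ.get i := by
  classical
  by_cases hbad : ∃ k, ∃ a b, ρ.get k = some a ∧ ρ.get (k + 1) = some b ∧ (a, b) ∉ M.R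
  · right
    have hk := Nat.find_spec hbad
    have hkmin := fun m (hm : m < Nat.find hbad) => Nat.find_min hbad hm
    set k := Nat.find hbad with hkdef
    obtain ⟨a, b, ha, hb, hab⟩ := hk
    have haC : a ∉ M.C := h.2.2.2.2 (a, b) (hρ.1.2.2 k a b ha hb) hab
    have hMR : ∀ i < k, ∀ c d, ρ.get i = some c → ρ.get (i + 1) = some d → (c, d) ∈ M.R := by
      intro i hi c d hc hd
      by_contra hcd
      exact hkmin i hi ⟨c, d, hc, hd, hcd⟩
    have hMS : ∀ i ≤ k, ∀ c, ρ.get i = some c → c ∈ M.S := by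
      intro i
      induction i with
      | zero => intro _ c hc; rw [hρ.1.1] at hc; rwa [← Option.some_inj.mp hc]
      | succ i ih =>
        intro hik c hc
        obtain ⟨d, hd⟩ := ρ.some_of_le (Nat.le_succ i) hc
        exact (M.R_sub _ (hMR i (by omega) d c hd hc)).2
    have hpath : M.IsPath s (ρ.trunc k) := by
      refine ⟨?_, ?_, ?_⟩
      · rw [FSeq.trunc_get, if_pos (by omega)]; exact hρ.1.1
      · intro i c hc
        rw [FSeq.trunc_get] at hc
        by_cases h1 : i ≤ k
        · rw [if_pos h1] at hc; exact hMS i h1 c hc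
        · rw [if_neg h1] at hc; exact absurd hc (by simp)
      · intro i c d hc hd
        rw [FSeq.trunc_get] at hc hd
        by_cases h2 : i + 1 ≤ k
        · rw [if_pos h2] at hd
          rw [if_pos (by omega)] at hc
          exact hMR i (by omega) c d hc hd
        · rw [if_neg h2] at hd; exact absurd hd (by simp)
    obtain ⟨ρ', hmax, hpre⟩ := exists_max_extension M hpath
    refine ⟨k, a, ρ', ha, haC, hmax, ?_⟩
    intro i hi
    obtain ⟨c, hc⟩ := ρ.some_of_le hi ha
    rw [hc, hpre i c (by rw [FSeq.trunc_get, if_pos hi]; exact hc)]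
  · left
    push_neg at hbad
    have hMR : ∀ i c d, ρ.get i = some c → ρ.get (i + 1) = some d → (c, d) ∈ M.R := by
      intro i c d hc hd
      exact hbad i c d hc hd
    have hMS : ∀ i c, ρ.get i = some c → c ∈ M.S := by
      intro i
      induction i with
      | zero => intro c hc; rw [hρ.1.1] at hc; rwa [← Option.some_inj.mp hc]
      | succ i ih =>
        intro c hc
        obtain ⟨d, hd⟩ := ρ.some_of_le (Nat.le_succ i) hc
        exact (M.R_sub _ (hMR i d c hd hc)).2
    have hpath : M.IsPath s ρ := ⟨hρ.1.1, hMS, hMR⟩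
    refine isMaxPath_of_terminal hpath ?_
    intro n a ha hend b hb
    exact maxpath_terminal hρ ha hend b (h.2.2.1 hb)

end Aux

/-- If `M ⊑ N`, then `W_M(s,φ)` implies `W_N(s,φ)` and `C_M(s,φ)`
implies `C_N(s,φ)`. -/
theorem W_C_upward_closed {σ P : Type} [Countable P] {F : Set (Formula P)}
    (hF : SubformulaClosed F) (M N : Model σ P F) (h : Submodel M N)
    (s : σ) (hs : s ∈ M.S) (φ : Formula P) (hφ : φ ∈ F) (hcomp : Formula.Compound φ) :
    (M.W s φ → N.W s φ) ∧ (M.Cc s φ → N.Cc s φ) := by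
  have hL := h.2.2.2.1
  have hC := h.2.1
  cases φ with
  | prop p => exact hcomp.elim
  | tt => exact ⟨fun _ => trivial, fun hc => hc.elim⟩
  | neg ψ => exact ⟨fun hw => hL _ _ _ hw, fun hc => hL _ _ _ hc⟩
  | or ψ₁ ψ₂ =>
    exact ⟨fun hw => hw.imp (hL _ _ _) (hL _ _ _),
      fun hc => ⟨hL _ _ _ hc.1, hL _ _ _ hc.2⟩⟩
  | EX ψ =>
    constructor
    · rintro ⟨t, ht, hl⟩
      exact ⟨t, h.2.2.1 ht, hL _ _ _ hl⟩
    · rintro ⟨hsC, hall⟩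
      refine ⟨hC hsC, fun t htN => ?_⟩
      by_cases hM : (s, t) ∈ M.R
      · exact hL _ _ _ (hall t hM)
      · exact absurd hsC (h.2.2.2.2 (s, t) htN hM)
  | EU ψ₁ ψ₂ =>
    constructor
    · rintro ⟨ρ, hmax, n, b, hb, hl2, hl1⟩
      obtain ⟨ρ', hmax', hpre⟩ :=
        exists_max_extension N (isPath_mono h (isPath_trunc hmax.1 n))
      have hagree : ∀ i ≤ n, ρ'.get i = ρ.get i := by
        intro i hi
        obtain ⟨c, hc⟩ := ρ.some_of_le hi hb
        rw [hc]
        exact hpre i c (by rw [FSeq.trunc_get, if_pos hi]; exact hc)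
      refine ⟨ρ', hmax', n, b, by rw [hagree n le_rfl]; exact hb, hL _ _ _ hl2, ?_⟩
      intro i hi a hai
      rw [hagree i hi.le] at hai
      exact hL _ _ _ (hl1 i hi a hai)
    · intro hc ρ hmax
      rcases max_cover h hs hmax with hMmax | ⟨k, a, ρ', hka, haC, hmax', hagree⟩
      · rcases hc ρ hMmax with hall | ⟨n, b, hb, hl1, hl2, hCc⟩
        · exact Or.inl fun n a ha => ⟨hC (hall n a ha).1, hL _ _ _ (hall n a ha).2⟩
        · exact Or.inr ⟨n, b, hb, hL _ _ _ hl1, hL _ _ _ hl2,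
            fun i hi a hai => ⟨hC (hCc i hi a hai).1, hL _ _ _ (hCc i hi a hai).2⟩⟩
      · rcases hc ρ' hmax' with hall | ⟨n, b, hb, hl1, hl2, hCc⟩
        · exact absurd (hall k a (by rw [hagree k le_rfl]; exact hka)).1 haC
        · have hnk : n ≤ k := by
            by_contra hn
            push_neg at hn
            exact haC (hCc k hn a (by rw [hagree k le_rfl]; exact hka)).1
          refine Or.inr ⟨n, b, by rw [← hagree n hnk]; exact hb,
            hL _ _ _ hl1, hL _ _ _ hl2, ?_⟩
          intro i hi a' hai
          rw [← hagree i (le_trans hi.le hnk)] at hai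
          exact ⟨hC (hCc i hi a' hai).1, hL _ _ _ (hCc i hi a' hai).2⟩
  | EG ψ =>
    constructor
    · rintro ⟨ρ, hmax, hl, hend⟩
      have hmaxN : N.IsMaxPath s ρ := by
        refine isMaxPath_of_terminal (isPath_mono h hmax.1) ?_
        intro n a ha hnone b hb
        by_cases hM : (a, b) ∈ M.R
        · exact maxpath_terminal hmax ha hnone b hM
        · exact h.2.2.2.2 (a, b) hb hM (hend n a ha hnone)
      exact ⟨ρ, hmaxN, fun n a ha => hL _ _ _ (hl n a ha),
        fun n a ha hnone => hC (hend n a ha hnone)⟩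
    · intro hc ρ hmax
      rcases max_cover h hs hmax with hMmax | ⟨k, a, ρ', hka, haC, hmax', hagree⟩
      · obtain ⟨n, b, hb, hl, hCc⟩ := hc ρ hMmax
        exact ⟨n, b, hb, hL _ _ _ hl, fun i hi a hai => hC (hCc i hi a hai)⟩
      · obtain ⟨n, b, hb, hl, hCc⟩ := hc ρ' hmax'
        have hnk : n ≤ k := by
          by_contra hn
          push_neg at hn
          exact haC (hCc k hn a (by rw [hagree k le_rfl]; exact hka))
        refine ⟨n, b, by rw [← hagree n hnk]; exact hb, hL _ _ _ hl, ?_⟩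
        intro i hi a' hai
        rw [← hagree i (le_trans hi.le hnk)] at hai
        exact hC (hCc i hi a' hai)

end CTLviz
end

section
/- Let S be a set and X, Y ⊆ S, with complements X̄ = S∖X and Ȳ = S∖Y. Then the two sets of (finite or infinite) sequences over S given by A = X*·Y·S^≤ω and B = Ȳ^≤ω ∪ Ȳ*·(X̄∩Ȳ)·S^≤ω satisfy A ∪ B = S^≤ω and A ∩ B = ∅. -/
namespace CTLviz

/-- The set of sequences `X* · Y · S^≤ω`. -/
def seqA {σ : Type} (S X Y : Set σ) : Set (FSeq σ) :=
  {ρ | SeqAll S ρ ∧ ∃ n b, ρ.get n = some b ∧ b ∈ Y ∧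
    ∀ i < n, ∀ a, ρ.get i = some a → a ∈ X}

/-- The set of sequences `Ȳ^≤ω ∪ Ȳ* · (X̄∩Ȳ) · S^≤ω` (with `X̄ = S∖X`, `Ȳ = S∖Y`). -/
def seqB {σ : Type} (S X Y : Set σ) : Set (FSeq σ) :=
  {ρ | SeqAll S ρ ∧ (SeqAll (S \ Y) ρ ∨
    ∃ n b, ρ.get n = some b ∧ b ∈ (S \ X) ∩ (S \ Y) ∧
      ∀ i < n, ∀ a, ρ.get i = some a → a ∈ S \ Y)}

/-- `A = X*·Y·S^≤ω` and `B = Ȳ^≤ω ∪ Ȳ*·(X̄∩Ȳ)·S^≤ω` satisfy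
`A ∪ B = S^≤ω` and `A ∩ B = ∅`. -/
theorem seqA_seqB_partition {σ : Type} (S X Y : Set σ) (hX : X ⊆ S) (hY : Y ⊆ S) :
    seqA S X Y ∪ seqB S X Y = {ρ : FSeq σ | SeqAll S ρ} ∧
    seqA S X Y ∩ seqB S X Y = ∅ := by
  classical
  constructor
  · ext ρ
    simp only [Set.mem_union, Set.mem_setOf_eq]
    constructor
    · rintro (h | h) <;> exact h.1
    · intro hS
      by_cases hbad : ∃ n, ∃ a, ρ.get n = some a ∧ (a ∈ Y ∨ a ∉ X)
      · have hn := Nat.find_spec hbad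
        have hmin := fun {i} (h : i < Nat.find hbad) => Nat.find_min hbad h
        obtain ⟨b, hb, hbY⟩ := hn
        have hpre : ∀ i < Nat.find hbad, ∀ a, ρ.get i = some a → a ∈ X ∧ a ∉ Y := by
          intro i hi a ha
          have := hmin hi
          push_neg at this
          obtain ⟨h1, h2⟩ := this a ha
          exact ⟨h2, h1⟩
        by_cases hY' : b ∈ Y
        · left
          exact ⟨hS, Nat.find hbad, b, hb, hY', fun i hi a ha => (hpre i hi a ha).1⟩
        · have hX' : b ∉ X := hbY.resolve_left hY'
          right
          exact ⟨hS, Or.inr ⟨Nat.find hbad, b, hb, ⟨⟨hS _ _ hb, hX'⟩,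
            ⟨hS _ _ hb, hY'⟩⟩, fun i hi a ha => ⟨hS _ _ ha, (hpre i hi a ha).2⟩⟩⟩
      · push_neg at hbad
        right
        exact ⟨hS, Or.inl fun n a ha => ⟨hS n a ha, (hbad n a ha).1⟩⟩
  · ext ρ
    simp only [Set.mem_inter_iff, Set.mem_empty_iff_false, iff_false]
    rintro ⟨⟨hSA, n, b, hb, hbY, hpreA⟩, hSB, hB⟩
    rcases hB with hall | ⟨m, c, hc, hcXY, hpreB⟩
    · exact (hall n b hb).2 hbY
    · rcases lt_trichotomy n m with h | h | h
      · exact (hpreB n h b hb).2 hbY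
      · subst h
        rw [hb] at hc
        injection hc with hc
        subst hc
        exact hcXY.2.2 hbY
      · exact hcXY.1.2 (hpreA m h c hc)

end CTLviz
end

section
/- Let F be a subformula-closed set of CTL formulas and let M be a sound model over F. For every state s ∈ S and every compound formula φ ∈ F: W_M(s,φ) holds if and only if s ⊨^M φ, and C_M(s,φ) holds if and only if s ⊭^M φ. -/
namespace CTLviz

/-- In a finite-or-infinite sequence, positions below a defined position are defined. -/
theorem FSeq.get_none_mono {σ : Type} (ρ : FSeq σ) {m n : ℕ} (h : m ≤ n)
    (hm : ρ.get m = none) : ρ.get n = none := by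
  induction n with
  | zero => simpa [Nat.le_zero.mp h] using hm
  | succ n ih =>
    rcases Nat.lt_or_ge m (n + 1) with h' | h'
    · exact ρ.down n (ih (Nat.lt_succ_iff.mp h'))
    · simpa [Nat.le_antisymm h h'] using hm

theorem sound_L_false {σ P : Type} {F : Set (Formula P)} {M : Model σ P F}
    (hsound : M.Sound) {t : σ} (ht : t ∈ M.S) {ψ : Formula P} (hψ : ψ ∈ F) :
    M.L t ψ = some false ↔ ¬ M.Sat ψ t := by
  obtain ⟨⟨_, htot⟩, hlab⟩ := hsound
  have h := htot t ht ψ hψ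
  have hiff := hlab t ht ψ hψ
  rcases hb : M.L t ψ with _ | b
  · exact absurd hb h
  · rw [hb] at hiff
    cases b
    · simp only [true_iff]
      intro hsat
      exact Bool.false_ne_true (Option.some.inj (hiff.mpr hsat))
    · have hsat := hiff.mp rfl
      simp [hsat]

/-- In a sound model, for every state `s` and compound `φ ∈ F`,
`W_M(s,φ)` holds iff `s ⊨ φ`, and `C_M(s,φ)` holds iff `s ⊭ φ`. -/
theorem W_C_iff_sat {σ P : Type} [Countable P] {F : Set (Formula P)}
    (hF : SubformulaClosed F) (M : Model σ P F) (hsound : M.Sound)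
    (s : σ) (hs : s ∈ M.S) (φ : Formula P) (hφ : φ ∈ F) (hcomp : Formula.Compound φ) :
    (M.W s φ ↔ M.Sat φ s) ∧ (M.Cc s φ ↔ ¬ M.Sat φ s) := by
  classical
  have hCS : M.C = M.S := hsound.1.1
  have Ltrue : ∀ t ∈ M.S, ∀ ψ ∈ F, (M.L t ψ = some true ↔ M.Sat ψ t) := hsound.2
  have Lfalse : ∀ t ∈ M.S, ∀ ψ ∈ F, (M.L t ψ = some false ↔ ¬ M.Sat ψ t) :=
    fun t ht ψ hψ => sound_L_false hsound ht hψ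
  cases φ with
  | prop p => exact hcomp.elim
  | tt => simp [Model.W, Model.Cc, Model.Sat]
  | neg ψ =>
    have hψ : ψ ∈ F := hF _ hφ rfl
    constructor
    · simpa [Model.W, Model.Sat] using Lfalse s hs ψ hψ
    · simpa [Model.Cc, Model.Sat, not_not] using Ltrue s hs ψ hψ
  | or ψ₁ ψ₂ =>
    have hψ₁ : ψ₁ ∈ F := hF _ hφ (by left; rfl)
    have hψ₂ : ψ₂ ∈ F := hF _ hφ (by right; rfl)
    constructor
    · simp only [Model.W, Model.Sat]
      rw [Ltrue s hs ψ₁ hψ₁, Ltrue s hs ψ₂ hψ₂]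
    · simp only [Model.Cc, Model.Sat, not_or]
      rw [Lfalse s hs ψ₁ hψ₁, Lfalse s hs ψ₂ hψ₂]
  | EX ψ =>
    have hψ : ψ ∈ F := hF _ hφ rfl
    have hSucc : ∀ t ∈ M.succ s, t ∈ M.S := fun t ht => (M.R_sub _ ht).2
    constructor
    · simp only [Model.W, Model.Sat]
      constructor
      · rintro ⟨t, ht, hL⟩
        exact ⟨t, ht, (Ltrue t (hSucc t ht) ψ hψ).mp hL⟩
      · rintro ⟨t, ht, hL⟩
        exact ⟨t, ht, (Ltrue t (hSucc t ht) ψ hψ).mpr hL⟩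
    · simp only [Model.Cc, Model.Sat]
      constructor
      · rintro ⟨_, hall⟩ ⟨t, ht, hsat⟩
        exact (Lfalse t (hSucc t ht) ψ hψ).mp (hall t ht) hsat
      · intro hn
        refine ⟨hCS ▸ hs, fun t ht => (Lfalse t (hSucc t ht) ψ hψ).mpr ?_⟩
        exact fun hsat => hn ⟨t, ht, hsat⟩
  | EU ψ₁ ψ₂ =>
    have hψ₁ : ψ₁ ∈ F := hF _ hφ (by left; rfl)
    have hψ₂ : ψ₂ ∈ F := hF _ hφ (by right; rfl)
    constructor
    · simp only [Model.W, Model.Sat]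
      constructor
      · rintro ⟨ρ, hmax, n, b, hget, hb, hall⟩
        have hbS := hmax.1.2.1 n b hget
        refine ⟨ρ, hmax, n, b, hget, (Ltrue b hbS ψ₂ hψ₂).mp hb, fun i hi a ha => ?_⟩
        exact (Ltrue a (hmax.1.2.1 i a ha) ψ₁ hψ₁).mp (hall i hi a ha)
      · rintro ⟨ρ, hmax, n, b, hget, hb, hall⟩
        have hbS := hmax.1.2.1 n b hget
        refine ⟨ρ, hmax, n, b, hget, (Ltrue b hbS ψ₂ hψ₂).mpr hb, fun i hi a ha => ?_⟩
        exact (Ltrue a (hmax.1.2.1 i a ha) ψ₁ hψ₁).mpr (hall i hi a ha)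
    · simp only [Model.Cc, Model.Sat]
      constructor
      · rintro hCc ⟨ρ, hmax, n, b, hget, hb, hall⟩
        have hbS := hmax.1.2.1 n b hget
        rcases hCc ρ hmax with h | ⟨m, c, hgc, hc1, hc2, hpre⟩
        · exact (Lfalse b hbS ψ₂ hψ₂).mp (h n b hget).2 hb
        · have hcS := hmax.1.2.1 m c hgc
          rcases lt_trichotomy n m with h' | h' | h'
          · exact (Lfalse b hbS ψ₂ hψ₂).mp (hpre n h' b hget).2 hb
          · subst h'
            rw [hget] at hgc
            cases Option.some.inj hgc
            exact (Lfalse b hbS ψ₂ hψ₂).mp hc2 hb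
          · exact (Lfalse c hcS ψ₁ hψ₁).mp hc1 (hall m h' c hgc)
      · intro hn ρ hmax
        by_cases h2 : ∀ n a, ρ.get n = some a → ¬ M.Sat ψ₂ a
        · left
          intro n a ha
          refine ⟨hCS ▸ hmax.1.2.1 n a ha, ?_⟩
          exact (Lfalse a (hmax.1.2.1 n a ha) ψ₂ hψ₂).mpr (h2 n a ha)
        · push_neg at h2
          have hex : ∃ n, ∃ a, ρ.get n = some a ∧ M.Sat ψ₂ a := by
            obtain ⟨n, a, ha, hsat⟩ := h2
            exact ⟨n, a, ha, hsat⟩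
          set n₀ := Nat.find hex with hn₀
          obtain ⟨a₀, ha₀, hsat₀⟩ := Nat.find_spec hex
          have hmin : ∀ i < n₀, ∀ a, ρ.get i = some a → ¬ M.Sat ψ₂ a := by
            intro i hi a ha hsat
            exact Nat.find_min hex hi ⟨a, ha, hsat⟩
          have hnall : ¬ ∀ i < n₀, ∀ a, ρ.get i = some a → M.Sat ψ₁ a := by
            intro hall
            exact hn ⟨ρ, hmax, n₀, a₀, ha₀, hsat₀, hall⟩
          push_neg at hnall
          obtain ⟨m, hm, c, hgc, hc1⟩ := hnall
          have hcS := hmax.1.2.1 m c hgc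
          right
          refine ⟨m, c, hgc, (Lfalse c hcS ψ₁ hψ₁).mpr hc1,
            (Lfalse c hcS ψ₂ hψ₂).mpr (hmin m hm c hgc), fun i hi a ha => ?_⟩
          refine ⟨hCS ▸ hmax.1.2.1 i a ha, ?_⟩
          exact (Lfalse a (hmax.1.2.1 i a ha) ψ₂ hψ₂).mpr (hmin i (hi.trans hm) a ha)
  | EG ψ =>
    have hψ : ψ ∈ F := hF _ hφ rfl
    constructor
    · simp only [Model.W, Model.Sat]
      constructor
      · rintro ⟨ρ, hmax, hall, _⟩
        exact ⟨ρ, hmax, fun n a ha =>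
          (Ltrue a (hmax.1.2.1 n a ha) ψ hψ).mp (hall n a ha)⟩
      · rintro ⟨ρ, hmax, hall⟩
        refine ⟨ρ, hmax, fun n a ha =>
          (Ltrue a (hmax.1.2.1 n a ha) ψ hψ).mpr (hall n a ha), fun n a ha _ => ?_⟩
        exact hCS ▸ hmax.1.2.1 n a ha
    · simp only [Model.Cc, Model.Sat]
      constructor
      · rintro hCc ⟨ρ, hmax, hall⟩
        obtain ⟨n, b, hget, hb, _⟩ := hCc ρ hmax
        exact (Lfalse b (hmax.1.2.1 n b hget) ψ hψ).mp hb (hall n b hget)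
      · intro hn ρ hmax
        by_contra hc
        push_neg at hc
        refine hn ⟨ρ, hmax, fun n a ha => ?_⟩
        by_contra hns
        have hb : M.L a ψ = some false := (Lfalse a (hmax.1.2.1 n a ha) ψ hψ).mpr hns
        obtain ⟨i, hi, c, hgc, hcC⟩ := hc n a ha hb
        exact hcC (hCS ▸ hmax.1.2.1 i c hgc)

end CTLviz
end
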